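/- arXiv:1703.08323 — 3 statements merged into one kernel-verified Lean document; each statement's English description precedes it below -/
import Mathlib

section
/- For every a ∈ H and every 𝐘 ∈ (ℂ^×)^{2r} one has the matrix identity x̄(a;𝐘) = Φ_H(a;𝐘) · x_{j_r}(Φ_{1,j_r}(𝐘)) x_{j_{r−1}}(Φ_{1,j_{r−1}}(𝐘)) ⋯ x_{j_1}(Φ_{1,j_1}(𝐘)) · x_{j_r}(Φ_{2,j_r}(𝐘)) x_{j_{r−1}}(Φ_{2,j_{r−1}}(𝐘)) ⋯ x_{j_1}(Φ_{2,j_1}(𝐘)); that is, x̄ = x^G_𝐢 ∘ φ, where x^G_𝐢(a;t_1,…,t_{2r}) = a·x_{j_{2r}}(t_1)x_{j_{2r−1}}(t_2)⋯x_{j_1}(t_{2r}). -/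
open scoped BigOperators

namespace DBC

/-- The k-th letter (from the right) of the reduced word 𝐢 of c². -/
def jIdx (r k : ℕ) : ℕ :=
  let k' := if r < k then k - r else k
  let h := (r + 1) / 2
  if k' ≤ h then (2 * h - 1) - 2 * (k' - 1) else 2 * (r / 2) - 2 * (k' - h - 1)

abbrev Mat (r : ℕ) (R : Type _) := Matrix (Fin (r + 1)) (Fin (r + 1)) R

variable {R : Type _}

open Fin.NatCast in
/-- `x_i(t) = 1 + t E_{i,i+1}` (1-indexed `i`). -/
def xm [CommRing R] (r i : ℕ) (t : R) : Mat r R :=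
  1 + Matrix.single ((i - 1 : ℕ) : Fin (r + 1)) ((i : ℕ) : Fin (r + 1)) t

open Fin.NatCast in
/-- `y_i(t) = 1 + t E_{i+1,i}` (1-indexed `i`). -/
def ym [CommRing R] (r i : ℕ) (t : R) : Mat r R :=
  1 + Matrix.single ((i : ℕ) : Fin (r + 1)) ((i - 1 : ℕ) : Fin (r + 1)) t

/-- `α_i^∨(t)` (1-indexed `i`). -/
def alm [Field R] (r i : ℕ) (t : R) : Mat r R :=
  Matrix.diagonal (fun m => if (m : ℕ) = i - 1 then t else if (m : ℕ) = i then t⁻¹ else 1)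

/-- `Y_{s,j}` with the out-of-range convention `Y_{s,j} = 1`. -/
def Yc [CommRing R] (r : ℕ) (Y : Fin 2 → Fin r → R) (s j : ℕ) : R :=
  if h : 1 ≤ s ∧ s ≤ 2 ∧ 1 ≤ j ∧ j ≤ r then Y ⟨s - 1, by omega⟩ ⟨j - 1, by omega⟩ else 1

/-- `x̄(a; Y)`. -/
def xbar [Field R] (r : ℕ) (a : Fin (r + 1) → R) (Y : Fin 2 → Fin r → R) : Mat r R :=
  Matrix.diagonal a *
    (((List.range r).map fun t =>
        xm r (jIdx r (r - t)) (Yc r Y 1 (jIdx r (r - t))) *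
          alm r (jIdx r (r - t)) (Yc r Y 1 (jIdx r (r - t)))).prod) *
    (((List.range r).map fun t =>
        xm r (jIdx r (r - t)) (Yc r Y 2 (jIdx r (r - t))) *
          alm r (jIdx r (r - t)) (Yc r Y 2 (jIdx r (r - t)))).prod)

/-- `a^{Λ_i} = a_1 ⋯ a_i`, with the convention `a^{Λ_i} = 1` for `i ≤ 0` or `i ≥ r+1`. -/
def aLam [CommRing R] (r : ℕ) (a : Fin (r + 1) → R) (i : ℕ) : R :=
  if 1 ≤ i ∧ i ≤ r then ∏ p : Fin (r + 1), (if (p : ℕ) < i then a p else 1) else 1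

open Fin.NatCast in
/-- The Weyl group element `s_{j_1} s_{j_2} ⋯ s_{j_k}` as a permutation of `Fin (r+1)`. -/
def wperm (r k : ℕ) : Equiv.Perm (Fin (r + 1)) :=
  (((List.range k).map fun t =>
      Equiv.swap ((jIdx r (t + 1) - 1 : ℕ) : Fin (r + 1))
        ((jIdx r (t + 1) : ℕ) : Fin (r + 1)))).prod

/-- The generalized minor `Δ_{Λ_m, wΛ_m}(g) = D_{{1,…,m}, w({1,…,m})}(g)`:
rows `{1,…,m}` and columns `w({1,…,m})`, both listed in increasing order. -/
def genMinor [CommRing R] (r m : ℕ) (w : Equiv.Perm (Fin (r + 1))) (g : Mat r R) : R :=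
  Matrix.det (Matrix.of fun p q :
      Fin ((Finset.univ.filter fun x : Fin (r + 1) => (x : ℕ) < m).card) =>
    g (((Finset.univ.filter fun x : Fin (r + 1) => (x : ℕ) < m).orderIsoOfFin rfl p : Fin (r+1)))
      ((((Finset.univ.filter fun x : Fin (r + 1) => (x : ℕ) < m).image w).orderIsoOfFin
        (Finset.card_image_of_injective _ w.injective) q : Fin (r+1))))


def YcU (r : ℕ) (Y : Fin 2 → Fin r → ℂˣ) (s j : ℕ) : ℂˣ :=
  if h : 1 ≤ s ∧ s ≤ 2 ∧ 1 ≤ j ∧ j ≤ r then Y ⟨s - 1, by omega⟩ ⟨j - 1, by omega⟩ else 1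

/-- `Φ_{1,l}(Y)`. -/
def Phi1 (r : ℕ) (Y : Fin 2 → Fin r → ℂˣ) (l : ℕ) : ℂˣ :=
  if l % 2 = 0 then
    YcU r Y 1 (l - 1) * YcU r Y 2 (l - 1) * YcU r Y 1 (l + 1) * YcU r Y 2 (l + 1) *
      (YcU r Y 1 l * (YcU r Y 2 l) ^ 2)⁻¹
  else
    YcU r Y 2 (l - 1) * YcU r Y 2 (l + 1) * (YcU r Y 1 l * (YcU r Y 2 l) ^ 2)⁻¹

/-- `Φ_{2,l}(Y)`. -/
def Phi2 (r : ℕ) (Y : Fin 2 → Fin r → ℂˣ) (l : ℕ) : ℂˣ :=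
  if l % 2 = 0 then YcU r Y 2 (l - 1) * YcU r Y 2 (l + 1) * (YcU r Y 2 l)⁻¹
  else (YcU r Y 2 l)⁻¹

/-- The diagonal entries of `Φ_H(a;Y) = a ⋅ ∏_{i=1}^r ∏_{s=1}^2 α_i^∨(Y_{s,i})`. -/
def PhiH (r : ℕ) (a : Fin (r + 1) → ℂˣ) (Y : Fin 2 → Fin r → ℂˣ) : Fin (r + 1) → ℂˣ :=
  fun m => a m * (YcU r Y 1 ((m : ℕ) + 1) * YcU r Y 2 ((m : ℕ) + 1)) *
    (YcU r Y 1 (m : ℕ) * YcU r Y 2 (m : ℕ))⁻¹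

/-- The map `φ : H × (ℂ^×)^{2r} → H × (ℂ^×)^{2r}`. -/
def phiMap (r : ℕ) :
    ((Fin (r + 1) → ℂˣ) × (Fin 2 → Fin r → ℂˣ)) → ((Fin (r + 1) → ℂˣ) × (Fin 2 → Fin r → ℂˣ)) :=
  fun aY => (PhiH r aY.1 aY.2,
    fun s j => if (s : ℕ) = 0 then Phi1 r aY.2 ((j : ℕ) + 1) else Phi2 r aY.2 ((j : ℕ) + 1))

/-- `Ψ_{1,l}(Y)` (with value `1` for `l` out of range). -/
def Psi1 (r : ℕ) (Y : Fin 2 → Fin r → ℂˣ) (l : ℕ) : ℂˣ :=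
  if 1 ≤ l ∧ l ≤ r then
    (if l % 2 = 0 then
      (YcU r Y 1 (l - 1) * YcU r Y 1 l * YcU r Y 1 (l + 1) * YcU r Y 2 (l - 3) *
        YcU r Y 2 (l - 2) * YcU r Y 2 (l + 2) * YcU r Y 2 (l + 3))⁻¹
    else
      (YcU r Y 1 l * YcU r Y 2 (l - 2) * YcU r Y 2 (l - 1) * YcU r Y 2 (l + 1) *
        YcU r Y 2 (l + 2))⁻¹)
  else 1

/-- `Ψ_{2,l}(Y)` (with value `1` for `l` out of range). -/
def Psi2 (r : ℕ) (Y : Fin 2 → Fin r → ℂˣ) (l : ℕ) : ℂˣ :=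
  if 1 ≤ l ∧ l ≤ r then
    (if l % 2 = 0 then (YcU r Y 2 (l - 1) * YcU r Y 2 l * YcU r Y 2 (l + 1))⁻¹
     else (YcU r Y 2 l)⁻¹)
  else 1

/-- The diagonal entries of `Ψ_H(a;Y) = a ⋅ (∏_{i=1}^r ∏_{s=1}^2 α_i^∨(Ψ_{s,i}(Y)))⁻¹`. -/
def PsiH (r : ℕ) (a : Fin (r + 1) → ℂˣ) (Y : Fin 2 → Fin r → ℂˣ) : Fin (r + 1) → ℂˣ :=
  fun m => a m * ((Psi1 r Y ((m : ℕ) + 1) * Psi2 r Y ((m : ℕ) + 1)) *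
    (Psi1 r Y (m : ℕ) * Psi2 r Y (m : ℕ))⁻¹)⁻¹

/-- The map `ψ : H × (ℂ^×)^{2r} → H × (ℂ^×)^{2r}`. -/
def psiMap (r : ℕ) :
    ((Fin (r + 1) → ℂˣ) × (Fin 2 → Fin r → ℂˣ)) → ((Fin (r + 1) → ℂˣ) × (Fin 2 → Fin r → ℂˣ)) :=
  fun aY => (PsiH r aY.1 aY.2,
    fun s j => if (s : ℕ) = 0 then Psi1 r aY.2 ((j : ℕ) + 1) else Psi2 r aY.2 ((j : ℕ) + 1))

/-- `s̄_i = x_i(-1) y_i(1) x_i(-1)`. -/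
noncomputable def sbar (r i : ℕ) : Mat r ℂ := xm r i (-1) * ym r i 1 * xm r i (-1)

/-- The representative `\overline{c²} = s̄_{j_{2r}} ⋯ s̄_{j_1}`. -/
noncomputable def c2bar (r : ℕ) : Mat r ℂ :=
  (((List.range (2 * r)).map fun t => sbar r (jIdx r (2 * r - t)))).prod

/-- membership in the Borel subgroup `B` of upper triangular matrices of `SL_{r+1}`. -/
def inB (r : ℕ) (m : Mat r ℂ) : Prop :=
  m.det = 1 ∧ ∀ p q : Fin (r + 1), q < p → m p q = 0

/-- membership in the opposite Borel subgroup `B₋` of lower triangular matrices of `SL_{r+1}`. -/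
def inBminus (r : ℕ) (m : Mat r ℂ) : Prop :=
  m.det = 1 ∧ ∀ p q : Fin (r + 1), p < q → m p q = 0


/-! ### The field `K = ℂ(a_1,…,a_r, Y_{1,1},…,Y_{2,r})` of rational functions -/

/-- The field of rational functions in the variables `a_1,…,a_r` and `Y_{s,j}`. -/
abbrev KK (r : ℕ) := FractionRing (MvPolynomial (Fin r ⊕ Fin 2 × Fin r) ℂ)

noncomputable def aKK (r : ℕ) (i : Fin r) : KK r :=
  algebraMap (MvPolynomial (Fin r ⊕ Fin 2 × Fin r) ℂ) (KK r) (MvPolynomial.X (Sum.inl i))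

noncomputable def YKK0 (r : ℕ) (s : Fin 2) (j : Fin r) : KK r :=
  algebraMap (MvPolynomial (Fin r ⊕ Fin 2 × Fin r) ℂ) (KK r) (MvPolynomial.X (Sum.inr (s, j)))

/-- `Y_{s,j}` as a rational function (with the out-of-range convention). -/
noncomputable def YK (r s j : ℕ) : KK r := Yc r (YKK0 r) s j

noncomputable def YKz (r : ℕ) (s : ℕ) (j : ℤ) : KK r := if 0 ≤ j then YK r s j.toNat else 1

/-- The generic element `a = diag(a_1,…,a_r,(a_1⋯a_r)⁻¹)` of `H`. -/
noncomputable def aDiagK (r : ℕ) : Fin (r + 1) → KK r :=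
  fun m => if h : (m : ℕ) < r then aKK r ⟨m, h⟩ else (∏ i : Fin r, aKK r i)⁻¹

/-- The generic point `x̄(a;Y)` with entries in `K`. -/
noncomputable def xbarK (r : ℕ) : Mat r (KK r) := xbar r (aDiagK r) (YKK0 r)

noncomputable def aLamK (r i : ℕ) : KK r := aLam r (aDiagK r) i

noncomputable def aLamKz (r : ℕ) (i : ℤ) : KK r := if 0 ≤ i then aLamK r i.toNat else 1

/-- `A_{1,j}` as a rational function (with the convention `A_{1,j} = 1` out of range). -/
noncomputable def A1K (r j : ℕ) : KK r :=
  if 1 ≤ j ∧ j ≤ r then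
    (if j % 2 = 0 then YK r 1 j * YK r 2 j / (YK r 1 (j - 1) * YK r 1 (j + 1))
     else YK r 1 j * YK r 2 j / (YK r 2 (j - 1) * YK r 2 (j + 1)))
  else 1

noncomputable def A1Kz (r : ℕ) (j : ℤ) : KK r := if 0 ≤ j then A1K r j.toNat else 1

/-- `A[b,c;x]`. -/
noncomputable def AbrK (r : ℕ) (b c x : ℤ) : KK r :=
  (∏ s ∈ Finset.Ico b c, A1Kz r (x - 2 * s - 2) * A1Kz r (x - 2 * s - 3))⁻¹ *
    (A1Kz r (x - 2 * c - 2))⁻¹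

/-! ### The quiver `Γ` and cluster mutation -/

def jz (r : ℕ) (m : ℤ) : ℤ := (jIdx r m.toNat : ℤ)

/-- The arrows of the quiver `Γ`. -/
def arr (r : ℕ) (v w : ℤ) : Prop :=
  (∃ m : ℤ, 1 ≤ m ∧ m ≤ (r : ℤ) ∧
    ((v = (r : ℤ) + m ∧ w = m) ∨ (v = m ∧ w = -(jz r m)))) ∨
  (∃ m m' : ℤ, 1 ≤ m ∧ m < m' ∧ m' ≤ (r : ℤ) ∧
    (jz r m - jz r m' = 1 ∨ jz r m' - jz r m = 1) ∧
    ((v = m ∧ w = m') ∨ (v = m' ∧ w = (r : ℤ) + m) ∨ (v = -(jz r m') ∧ w = m)))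

open Classical in
/-- The exchange matrix of `Γ`. -/
noncomputable def bmat (r : ℕ) (v k : ℤ) : ℤ :=
  (if arr r v k then 1 else 0) - (if arr r k v then 1 else 0)

/-- The vertex set `{-r,…,-1} ∪ {1,…,2r}` (as a subset of `Finset.Icc (-r) (2r)`;
the extra vertex `0` is isolated and carries no arrows). -/
noncomputable def VFin (r : ℕ) : Finset ℤ := Finset.Icc (-(r : ℤ)) (2 * r)

/-- Mutation of a seed `(z, B)` at the (mutable) vertex `k`. -/
noncomputable def mutate (r : ℕ) (k : ℤ) (S : (ℤ → KK r) × (ℤ → ℤ → ℤ)) :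
    (ℤ → KK r) × (ℤ → ℤ → ℤ) :=
  ⟨fun v => if v = k then
      ((∏ w ∈ VFin r, if 0 < S.2 w k then S.1 w ^ (S.2 w k).toNat else 1) +
       (∏ w ∈ VFin r, if S.2 w k < 0 then S.1 w ^ (-(S.2 w k)).toNat else 1)) / S.1 k
    else S.1 v,
   fun v l => if v = k ∨ l = k then -(S.2 v l)
     else S.2 v l + (|S.2 v k| * S.2 k l + S.2 v k * |S.2 k l|) / 2⟩

/-- The initial seed `𝕍`. -/
noncomputable def initSeed (r : ℕ) : (ℤ → KK r) × (ℤ → ℤ → ℤ) :=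
  ⟨fun v => if 1 ≤ v ∧ v ≤ 2 * (r : ℤ) then
      genMinor r (jIdx r v.toNat) (wperm r v.toNat) (xbarK r)
    else if -(r : ℤ) ≤ v ∧ v ≤ -1 then genMinor r (-v).toNat 1 (xbarK r)
    else 1,
   bmat r⟩

/-- Application of a sequence of mutations, the rightmost applied first. -/
noncomputable def mutSeq (r : ℕ) (ks : List ℤ) (S : (ℤ → KK r) × (ℤ → ℤ → ℤ)) :
    (ℤ → KK r) × (ℤ → ℤ → ℤ) :=
  ks.foldr (fun k T => mutate r k T) S

/-- The cluster variable at vertex `v` of the seed obtained from `𝕍` by the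
mutation sequence `ks` (rightmost applied first). -/
noncomputable def cvar (r : ℕ) (ks : List ℤ) (v : ℤ) : KK r :=
  (mutSeq r ks (initSeed r)).1 v

/-- The mutation sequence `μ[l]`. -/
def muList (r k l : ℕ) : List ℤ :=
  (((List.range (l + 1)).reverse).map fun t : ℕ =>
    [((k : ℤ) - ((r / 2 : ℕ) : ℤ) + t), ((k : ℤ) + t + 1), ((k : ℤ) + t)]).flatten

/-- The mutation sequence `μ′[l]`. -/
def mu'List (r k l : ℕ) : List ℤ :=
  ((((List.range (l + 1)).reverse).map fun t : ℕ =>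
    [((k : ℤ) + t + 1), (((r / 2 : ℕ) : ℤ) + k + t + 2), (((r / 2 : ℕ) : ℤ) + k + t + 1)]).flatten)
    ++ [(k : ℤ)]

/-- The mutation sequence `μ″[l]`. -/
def mu''List (r l : ℕ) : List ℤ :=
  ((((List.range (l + 1)).reverse).map fun t : ℕ =>
    [((((r + 1) / 2 : ℕ) : ℤ) - t - 1), ((r : ℤ) - t - 1), ((r : ℤ) - t)]).flatten)
    ++ [(((r + 1) / 2 : ℕ) : ℤ)]

/-! ### The index sets `R^p_l` -/

/-- `(𝐛,𝐜) ∈ R^p_l`, i.e. `0 ≤ b_1 < c_1 < b_2 < c_2 < ⋯ < b_p < c_p ≤ l`. -/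
def IsRpair (l p : ℕ) (b c : Fin p → ℤ) : Prop :=
  (∀ i, b i < c i) ∧ (∀ i j, i < j → c i < b j) ∧ (∀ i, 0 ≤ b i ∧ c i ≤ (l : ℤ))

open Classical in
/-- `Σ_{p ≥ 1} Σ_{(𝐛,𝐜) ∈ R^p_l} F p 𝐛 𝐜`. -/
noncomputable def RSum {M : Type _} [AddCommMonoid M] (l : ℕ)
    (F : (p : ℕ) → (Fin p → ℤ) → (Fin p → ℤ) → M) : M :=
  ∑ p ∈ Finset.Icc 1 (l + 1),
    ∑ bc ∈ Finset.univ.filter (fun bc : (Fin p → Fin (l + 1)) × (Fin p → Fin (l + 1)) =>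
        IsRpair l p (fun i => ((bc.1 i : ℕ) : ℤ)) (fun i => ((bc.2 i : ℕ) : ℤ))),
      F p (fun i => ((bc.1 i : ℕ) : ℤ)) (fun i => ((bc.2 i : ℕ) : ℤ))

def bfirst (p : ℕ) (b : Fin p → ℤ) : ℤ := if h : 0 < p then b ⟨0, h⟩ else 0

def clast (p : ℕ) (c : Fin p → ℤ) : ℤ := if h : 0 < p then c ⟨p - 1, by omega⟩ else 0

/-- `q ∈ [𝐛,𝐜] = [b_1,c_1] ∪ ⋯ ∪ [b_p,c_p]`. -/
def inBC (p : ℕ) (b c : Fin p → ℤ) (q : ℤ) : Prop := ∃ i, b i ≤ q ∧ q ≤ c i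

instance (p : ℕ) (b c : Fin p → ℤ) (q : ℤ) : Decidable (inBC p b c q) :=
  inferInstanceAs (Decidable (∃ i, b i ≤ q ∧ q ≤ c i))

/-- `j_k` as an integer. -/
def jkz (r k : ℕ) : ℤ := (jIdx r k : ℤ)

/-! ### Monomial realizations of crystals -/

/-- A formal Laurent monomial `∏ Y_{s,j}^{ζ_{s,j}}` (`s ∈ ℤ`, `j ∈ {1,…,r}`),
encoded by its finitely supported exponent vector (`j` is 0-indexed here). -/
abbrev Mon (r : ℕ) := (ℤ × Fin r) →₀ ℤ

/-- The exponent vector of `Y_{s,j}` (`j` 1-indexed, `0` out of range). -/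
noncomputable def YexpM (r : ℕ) (s : ℤ) (j : ℕ) : Mon r :=
  if h : 1 ≤ j ∧ j ≤ r then Finsupp.single (s, ⟨j - 1, by omega⟩) 1 else 0

/-- The exponent vector of the monomial `A_{s,i}`. -/
noncomputable def AexpM (r : ℕ) (s : ℤ) (i : ℕ) : Mon r :=
  YexpM r s i + YexpM r (s + 1) i -
    (if i % 2 = 1 then YexpM r (s + 1) (i - 1) + YexpM r (s + 1) (i + 1)
     else YexpM r s (i - 1) + YexpM r s (i + 1))

/-- The partial sum `Σ_{k ≤ s} ζ_{k,i}` (`i` 1-indexed). -/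
noncomputable def psum (r : ℕ) (M : Mon r) (i : ℕ) (s : ℤ) : ℤ :=
  ∑ x ∈ M.support.filter (fun x => ((x.2 : ℕ) + 1 = i) ∧ x.1 ≤ s), M x

/-- `φ_i(M) = max { Σ_{k ≤ s} ζ_{k,i} : s ∈ ℤ }`. -/
noncomputable def phiIM (r : ℕ) (M : Mon r) (i : ℕ) : ℤ :=
  (insert (0 : ℤ) ((M.support.image Prod.fst).image fun s => psum r M i s)).max'
    (Finset.insert_nonempty _ _)

/-- `n_{f_i} = min { n : φ_i(M) = Σ_{k ≤ n} ζ_{k,i} }`. -/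
noncomputable def nfM (r : ℕ) (M : Mon r) (i : ℕ) : ℤ :=
  WithTop.untopD 0
    ((((M.support.filter fun x => (x.2 : ℕ) + 1 = i).image Prod.fst).filter
      fun s => psum r M i s = phiIM r M i).min)

/-- The Kashiwara operator `f̃_i` on monomials (with `0 = none`). -/
noncomputable def ftil (r i : ℕ) : Option (Mon r) → Option (Mon r)
  | none => none
  | some M => if 0 < phiIM r M i then some (M - AexpM r (nfM r M i) i) else none

/-- The monomial realization of the Demazure crystal `B(Λ_{j_k})_{s_{j_1}⋯s_{j_k}}`:
`{ f̃_{j_1}^{c_1} ⋯ f̃_{j_k}^{c_k} (Y_{1,j_k}) } ∖ {0}`. -/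
noncomputable def DemSet (r k : ℕ) : Set (Mon r) :=
  { M | ∃ c : ℕ → ℕ,
      ((List.range k).reverse.foldl
        (fun x t => (ftil r (jIdx r (t + 1)))^[c (t + 1)] x)
        (some (YexpM r 1 (jIdx r k)))) = some M }

/-- Evaluation of a Laurent monomial at `Y_{1,j}, Y_{2,j} ∈ ℂˣ`. -/
noncomputable def evalMon (r : ℕ) (M : Mon r) (Y : Fin 2 → Fin r → ℂˣ) : ℂ :=
  ∏ x ∈ M.support,
    (if x.1 = 1 then ((Y 0 x.2 : ℂ)) else if x.1 = 2 then ((Y 1 x.2 : ℂ)) else 1) ^ (M x)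

section Aux
variable (r : ℕ)
open Fin.NatCast

lemma jIdx_eval (t : ℕ) (ht : t < r) :
    jIdx r (r - t) = if t < r / 2 then 2 * t + 2 else 2 * (t - r / 2) + 1 := by
  simp only [jIdx]
  split_ifs <;> omega

lemma prod_word {M : Type _} [Monoid M] (F : ℕ → M) :
    ((List.range r).map fun t => F (jIdx r (r - t))).prod =
      ((List.range (r / 2)).map fun t => F (2 * t + 2)).prod *
        ((List.range ((r + 1) / 2)).map fun t => F (2 * t + 1)).prod := by
  rw [show List.range r = List.range (r / 2 + (r + 1) / 2) from by congr 1; omega]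
  rw [List.range_add, List.map_append, List.prod_append, List.map_map]
  congr 1
  · congr 1
    apply List.map_congr_left
    intro t htm
    rw [List.mem_range] at htm
    rw [jIdx_eval r t (by omega), if_pos htm]
  · congr 1
    apply List.map_congr_left
    intro t htm
    rw [List.mem_range] at htm
    simp only [Function.comp]
    rw [jIdx_eval r (r / 2 + t) (by omega), if_neg (by omega)]
    congr 1
    omega

lemma std_mul_diag (a b : Fin (r + 1)) (t : ℂ) (d : Fin (r + 1) → ℂ) :
    Matrix.single a b t * Matrix.diagonal d = Matrix.single a b (t * d b) := by
  ext p q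
  rw [Matrix.mul_diagonal]
  simp only [Matrix.single, Matrix.of_apply]
  split_ifs with h
  · rw [h.2]
  · simp

lemma xa_eq (i : ℕ) (hir : i + 1 ≤ r) (t : ℂ) (ht : t ≠ 0) :
    xm r (i + 1) t * alm r (i + 1) t = alm r (i + 1) t +
      Matrix.single ((i : ℕ) : Fin (r + 1)) ((i + 1 : ℕ) : Fin (r + 1)) 1 := by
  have hb : (((i + 1 : ℕ) : Fin (r + 1)) : ℕ) = i + 1 := Fin.val_cast_of_lt (by omega)
  unfold xm alm
  rw [add_mul, one_mul, std_mul_diag, Nat.add_sub_cancel]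
  congr 1
  simp only [hb]
  rw [if_neg (by omega)]
  simp [mul_inv_cancel₀ ht]


noncomputable def EvPmat (r : ℕ) (c : ℕ → ℂ) (n : ℕ) : Mat r ℂ :=
  Matrix.of fun p q =>
    if (q : ℕ) = (p : ℕ) then
      (if (p : ℕ) % 2 = 0 then (if (p : ℕ) ≤ 2 * n then (c (p : ℕ))⁻¹ else 1)
       else (if (p : ℕ) + 1 ≤ 2 * n then c ((p : ℕ) + 1) else 1))
    else if (q : ℕ) = (p : ℕ) + 1 ∧ (p : ℕ) % 2 = 1 ∧ (p : ℕ) + 1 ≤ 2 * n then 1 else 0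

lemma ev_prod (c : ℕ → ℂ) (hc0 : c 0 = 1) (hnz : ∀ j, c j ≠ 0) :
    ∀ n, 2 * n ≤ r →
      ((List.range n).map fun t =>
        xm r (2 * t + 2) (c (2 * t + 2)) * alm r (2 * t + 2) (c (2 * t + 2))).prod
      = EvPmat r c n := by
  intro n
  induction n with
  | zero =>
    intro _
    ext p q
    rcases p with ⟨P, hP⟩
    rcases q with ⟨Q, hQ⟩
    simp only [List.range_zero, List.map_nil, List.prod_nil, EvPmat, Matrix.of_apply,
      Matrix.one_apply, Fin.mk.injEq]
    split_ifs <;> first | rfl | omega |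
      (rw [show P = 0 from by omega, hc0, inv_one]) | (rw [hc0, inv_one])
  | succ n ih =>
    intro h
    rw [List.range_succ, List.map_append, List.prod_append, List.map_singleton,
      List.prod_singleton, ih (by omega)]
    have key := xa_eq r (2 * n + 1) (by omega) (c (2 * n + 2)) (hnz _)
    rw [show 2 * n + 1 + 1 = 2 * n + 2 from by omega] at key
    rw [key, mul_add]
    have h1 : 2 * n + 1 < r + 1 := by omega
    have h2 : 2 * n + 2 < r + 1 := by omega
    have hc1 : (((2 * n + 1 : ℕ) : Fin (r + 1)) : ℕ) = 2 * n + 1 := Fin.val_cast_of_lt h1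
    have hc2 : (((2 * n + 2 : ℕ) : Fin (r + 1)) : ℕ) = 2 * n + 2 := Fin.val_cast_of_lt h2
    ext p q
    rw [Matrix.add_apply]
    simp only [alm]
    rw [Matrix.mul_diagonal]
    rw [show 2 * n + 2 - 1 = 2 * n + 1 from by omega]
    by_cases hqb : q = ((2 * n + 2 : ℕ) : Fin (r + 1))
    · subst hqb
      rw [Matrix.mul_single_apply_same]
      rcases p with ⟨P, hP⟩
      simp only [EvPmat, Matrix.of_apply, hc1, hc2, mul_one]
      split_ifs <;>
        first
          | rfl | omega | ring1
          | (rw [show P = 2 * n + 2 from by omega]; ring_nf)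
          | (rw [show P = 2 * n + 1 from by omega]; ring_nf)
          | (congr 1 <;> omega)
    · rw [Matrix.mul_single_apply_of_ne _ _ _ _ _ hqb]
      rcases p with ⟨P, hP⟩
      rcases q with ⟨Q, hQ⟩
      have hQne : Q ≠ 2 * n + 2 := by
        intro hh
        apply hqb
        apply Fin.ext
        rw [hc2]
        exact hh
      simp only [EvPmat, Matrix.of_apply, hc1, hc2, mul_one, add_zero]
      split_ifs <;>
        first
          | rfl | omega | ring1
          | (rw [show P = 2 * n + 2 from by omega]; ring_nf)
          | (rw [show P = 2 * n + 1 from by omega]; ring_nf)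
          | (rw [show Q = 2 * n + 1 from by omega]; ring_nf)
          | (rw [show Q = P + 1 from by omega]; ring_nf)
          | (rw [show Q = P from by omega]; ring_nf)
          | (congr 1 <;> omega)


noncomputable def OdPmat (r : ℕ) (c : ℕ → ℂ) (n : ℕ) : Mat r ℂ :=
  Matrix.of fun p q =>
    if (q : ℕ) = (p : ℕ) then
      (if (p : ℕ) % 2 = 0 then (if (p : ℕ) + 1 < 2 * n then c ((p : ℕ) + 1) else 1)
       else (if (p : ℕ) < 2 * n then (c (p : ℕ))⁻¹ else 1))
    else if (q : ℕ) = (p : ℕ) + 1 ∧ (p : ℕ) % 2 = 0 ∧ (p : ℕ) + 1 < 2 * n then 1 else 0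

lemma od_prod (c : ℕ → ℂ) (hnz : ∀ j, c j ≠ 0) :
    ∀ n, 2 * n ≤ r + 1 →
      ((List.range n).map fun t =>
        xm r (2 * t + 1) (c (2 * t + 1)) * alm r (2 * t + 1) (c (2 * t + 1))).prod
      = OdPmat r c n := by
  intro n
  induction n with
  | zero =>
    intro _
    ext p q
    rcases p with ⟨P, hP⟩
    rcases q with ⟨Q, hQ⟩
    simp only [List.range_zero, List.map_nil, List.prod_nil, OdPmat, Matrix.of_apply,
      Matrix.one_apply, Fin.mk.injEq]
    split_ifs <;> first | rfl | omega
  | succ n ih =>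
    intro h
    rw [List.range_succ, List.map_append, List.prod_append, List.map_singleton,
      List.prod_singleton, ih (by omega)]
    have key := xa_eq r (2 * n) (by omega) (c (2 * n + 1)) (hnz _)
    rw [key, mul_add]
    have h1 : 2 * n < r + 1 := by omega
    have h2 : 2 * n + 1 < r + 1 := by omega
    have hc1 : (((2 * n : ℕ) : Fin (r + 1)) : ℕ) = 2 * n := Fin.val_cast_of_lt h1
    have hc2 : (((2 * n + 1 : ℕ) : Fin (r + 1)) : ℕ) = 2 * n + 1 := Fin.val_cast_of_lt h2
    ext p q
    rw [Matrix.add_apply]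
    simp only [alm]
    rw [Matrix.mul_diagonal]
    rw [show 2 * n + 1 - 1 = 2 * n from by omega]
    by_cases hqb : q = ((2 * n + 1 : ℕ) : Fin (r + 1))
    · subst hqb
      rw [Matrix.mul_single_apply_same]
      rcases p with ⟨P, hP⟩
      simp only [OdPmat, Matrix.of_apply, hc1, hc2, mul_one]
      split_ifs <;>
        first
          | rfl | omega | ring1
          | (rw [show P = 2 * n + 1 from by omega]; ring_nf)
          | (rw [show P = 2 * n from by omega]; ring_nf)
          | (congr 1 <;> omega)
    · rw [Matrix.mul_single_apply_of_ne _ _ _ _ _ hqb]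
      rcases p with ⟨P, hP⟩
      rcases q with ⟨Q, hQ⟩
      have hQne : Q ≠ 2 * n + 1 := by
        intro hh
        apply hqb
        apply Fin.ext
        rw [hc2]
        exact hh
      simp only [OdPmat, Matrix.of_apply, hc1, hc2, mul_one, add_zero]
      split_ifs <;>
        first
          | rfl | omega | ring1
          | (rw [show P = 2 * n + 1 from by omega]; ring_nf)
          | (rw [show P = 2 * n from by omega]; ring_nf)
          | (rw [show Q = 2 * n from by omega]; ring_nf)
          | (rw [show Q = P + 1 from by omega]; ring_nf)
          | (rw [show Q = P from by omega]; ring_nf)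
          | (congr 1 <;> omega)

noncomputable def XevPmat (r : ℕ) (φ : ℕ → ℂ) (n : ℕ) : Mat r ℂ :=
  Matrix.of fun p q =>
    if (q : ℕ) = (p : ℕ) then 1
    else if (q : ℕ) = (p : ℕ) + 1 ∧ (p : ℕ) % 2 = 1 ∧ (p : ℕ) + 1 ≤ 2 * n then φ ((p : ℕ) + 1)
    else 0

noncomputable def XodPmat (r : ℕ) (φ : ℕ → ℂ) (n : ℕ) : Mat r ℂ :=
  Matrix.of fun p q =>
    if (q : ℕ) = (p : ℕ) then 1
    else if (q : ℕ) = (p : ℕ) + 1 ∧ (p : ℕ) % 2 = 0 ∧ (p : ℕ) + 1 < 2 * n then φ ((p : ℕ) + 1)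
    else 0

lemma xev_prod (φ : ℕ → ℂ) :
    ∀ n, 2 * n ≤ r →
      ((List.range n).map fun t => xm r (2 * t + 2) (φ (2 * t + 2))).prod = XevPmat r φ n := by
  intro n
  induction n with
  | zero =>
    intro _
    ext p q
    rcases p with ⟨P, hP⟩
    rcases q with ⟨Q, hQ⟩
    simp only [List.range_zero, List.map_nil, List.prod_nil, XevPmat, Matrix.of_apply,
      Matrix.one_apply, Fin.mk.injEq]
    split_ifs <;> first | rfl | omega
  | succ n ih =>
    intro h
    rw [List.range_succ, List.map_append, List.prod_append, List.map_singleton,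
      List.prod_singleton, ih (by omega)]
    have h1 : 2 * n + 1 < r + 1 := by omega
    have h2 : 2 * n + 2 < r + 1 := by omega
    have hc1 : (((2 * n + 1 : ℕ) : Fin (r + 1)) : ℕ) = 2 * n + 1 := Fin.val_cast_of_lt h1
    have hc2 : (((2 * n + 2 : ℕ) : Fin (r + 1)) : ℕ) = 2 * n + 2 := Fin.val_cast_of_lt h2
    rw [show xm r (2 * n + 2) (φ (2 * n + 2)) = 1 + Matrix.single
      (((2 * n + 1 : ℕ)) : Fin (r + 1)) (((2 * n + 2 : ℕ)) : Fin (r + 1)) (φ (2 * n + 2)) from by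
        rw [xm, show 2 * n + 2 - 1 = 2 * n + 1 from by omega]]
    rw [mul_add, mul_one]
    ext p q
    rw [Matrix.add_apply]
    by_cases hqb : q = ((2 * n + 2 : ℕ) : Fin (r + 1))
    · subst hqb
      rw [Matrix.mul_single_apply_same]
      rcases p with ⟨P, hP⟩
      simp only [XevPmat, Matrix.of_apply, hc1, hc2]
      split_ifs <;>
        first
          | rfl | omega | ring1
          | (rw [show P = 2 * n + 1 from by omega]; ring_nf)
          | (congr 1 <;> omega)
    · rw [Matrix.mul_single_apply_of_ne _ _ _ _ _ hqb]
      rcases p with ⟨P, hP⟩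
      rcases q with ⟨Q, hQ⟩
      have hQne : Q ≠ 2 * n + 2 := by
        intro hh
        apply hqb
        apply Fin.ext
        rw [hc2]
        exact hh
      simp only [XevPmat, Matrix.of_apply, hc1, hc2, add_zero]
      split_ifs <;>
        first
          | rfl | omega | ring1
          | (congr 1 <;> omega)

lemma xod_prod (φ : ℕ → ℂ) :
    ∀ n, 2 * n ≤ r + 1 →
      ((List.range n).map fun t => xm r (2 * t + 1) (φ (2 * t + 1))).prod = XodPmat r φ n := by
  intro n
  induction n with
  | zero =>
    intro _
    ext p q
    rcases p with ⟨P, hP⟩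
    rcases q with ⟨Q, hQ⟩
    simp only [List.range_zero, List.map_nil, List.prod_nil, XodPmat, Matrix.of_apply,
      Matrix.one_apply, Fin.mk.injEq]
    split_ifs <;> first | rfl | omega
  | succ n ih =>
    intro h
    rw [List.range_succ, List.map_append, List.prod_append, List.map_singleton,
      List.prod_singleton, ih (by omega)]
    have h1 : 2 * n < r + 1 := by omega
    have h2 : 2 * n + 1 < r + 1 := by omega
    have hc1 : (((2 * n : ℕ) : Fin (r + 1)) : ℕ) = 2 * n := Fin.val_cast_of_lt h1
    have hc2 : (((2 * n + 1 : ℕ) : Fin (r + 1)) : ℕ) = 2 * n + 1 := Fin.val_cast_of_lt h2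
    rw [show xm r (2 * n + 1) (φ (2 * n + 1)) = 1 + Matrix.single
      (((2 * n : ℕ)) : Fin (r + 1)) (((2 * n + 1 : ℕ)) : Fin (r + 1)) (φ (2 * n + 1)) from by
        rw [xm, show 2 * n + 1 - 1 = 2 * n from by omega]]
    rw [mul_add, mul_one]
    ext p q
    rw [Matrix.add_apply]
    by_cases hqb : q = ((2 * n + 1 : ℕ) : Fin (r + 1))
    · subst hqb
      rw [Matrix.mul_single_apply_same]
      rcases p with ⟨P, hP⟩
      simp only [XodPmat, Matrix.of_apply, hc1, hc2]
      split_ifs <;>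
        first
          | rfl | omega | ring1
          | (rw [show P = 2 * n from by omega]; ring_nf)
          | (congr 1 <;> omega)
    · rw [Matrix.mul_single_apply_of_ne _ _ _ _ _ hqb]
      rcases p with ⟨P, hP⟩
      rcases q with ⟨Q, hQ⟩
      have hQne : Q ≠ 2 * n + 1 := by
        intro hh
        apply hqb
        apply Fin.ext
        rw [hc2]
        exact hh
      simp only [XodPmat, Matrix.of_apply, hc1, hc2, add_zero]
      split_ifs <;>
        first
          | rfl | omega | ring1
          | (congr 1 <;> omega)


noncomputable def DmatP (r : ℕ) (f : ℕ → ℂ) : Mat r ℂ := Matrix.diagonal fun m => f (m : ℕ)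

noncomputable def UmatP (r par : ℕ) (u : ℕ → ℂ) : Mat r ℂ :=
  Matrix.of fun p q =>
    if (q : ℕ) = (p : ℕ) then 1
    else if (q : ℕ) = (p : ℕ) + 1 ∧ (p : ℕ) % 2 = par then u (p : ℕ) else 0

noncomputable def dEv (c : ℕ → ℂ) : ℕ → ℂ := fun P => if P % 2 = 0 then (c P)⁻¹ else c (P + 1)
noncomputable def dOd (c : ℕ → ℂ) : ℕ → ℂ := fun P => if P % 2 = 0 then c (P + 1) else (c P)⁻¹
noncomputable def uInv (c : ℕ → ℂ) : ℕ → ℂ := fun P => (c (P + 1))⁻¹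
noncomputable def shf (f u : ℕ → ℂ) : ℕ → ℂ := fun P => u P * f (P + 1) * (f P)⁻¹

lemma ev_full (c : ℕ → ℂ) (htop : ∀ j, r < j → c j = 1) (hnz : ∀ j, c j ≠ 0) :
    EvPmat r c (r / 2) = DmatP r (dEv c) * UmatP r 1 (uInv c) := by
  ext p q
  rcases p with ⟨P, hP⟩
  rcases q with ⟨Q, hQ⟩
  rw [DmatP, Matrix.diagonal_mul]
  simp only [EvPmat, UmatP, uInv, dEv, Matrix.of_apply]
  split_ifs <;>
    first
      | rfl | omega | ring1
      | (rw [htop (P + 1) (by omega)]; first | rfl | ring1)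
      | (exact (mul_inv_cancel₀ (hnz _)).symm)

lemma od_full (c : ℕ → ℂ) (htop : ∀ j, r < j → c j = 1) (hnz : ∀ j, c j ≠ 0) :
    OdPmat r c ((r + 1) / 2) = DmatP r (dOd c) * UmatP r 0 (uInv c) := by
  ext p q
  rcases p with ⟨P, hP⟩
  rcases q with ⟨Q, hQ⟩
  rw [DmatP, Matrix.diagonal_mul]
  simp only [OdPmat, UmatP, uInv, dOd, Matrix.of_apply]
  split_ifs <;>
    first
      | rfl | omega | ring1
      | (rw [htop (P + 1) (by omega)]; first | rfl | ring1)
      | (exact (mul_inv_cancel₀ (hnz _)).symm)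

lemma xev_full (φ : ℕ → ℂ) :
    XevPmat r φ (r / 2) = UmatP r 1 (fun P => φ (P + 1)) := by
  ext p q
  rcases p with ⟨P, hP⟩
  rcases q with ⟨Q, hQ⟩
  simp only [XevPmat, UmatP, Matrix.of_apply]
  split_ifs <;> first | rfl | omega

lemma xod_full (φ : ℕ → ℂ) :
    XodPmat r φ ((r + 1) / 2) = UmatP r 0 (fun P => φ (P + 1)) := by
  ext p q
  rcases p with ⟨P, hP⟩
  rcases q with ⟨Q, hQ⟩
  simp only [XodPmat, UmatP, Matrix.of_apply]
  split_ifs <;> first | rfl | omega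

lemma U_mul_D (par : ℕ) (u f : ℕ → ℂ) (hf : ∀ P, f P ≠ 0) :
    UmatP r par u * DmatP r f = DmatP r f * UmatP r par (shf f u) := by
  ext p q
  rcases p with ⟨P, hP⟩
  rcases q with ⟨Q, hQ⟩
  rw [DmatP, Matrix.diagonal_mul, Matrix.mul_diagonal]
  simp only [UmatP, shf, Matrix.of_apply]
  split_ifs <;>
    first
      | rfl | omega | ring1
      | (rw [show Q = P + 1 from by omega]; rw [mul_comm (f P)];
         rw [mul_assoc, inv_mul_cancel₀ (hf P), mul_one])
      | (rw [show Q = P from by omega]; ring1)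

lemma UD_swap (par : ℕ) (u f : ℕ → ℂ) (hf : ∀ P, f P ≠ 0) (X : Mat r ℂ) :
    UmatP r par u * (DmatP r f * X) = DmatP r f * (UmatP r par (shf f u) * X) := by
  rw [← mul_assoc, U_mul_D r par u f hf, mul_assoc]

lemma U_congr (par : ℕ) (u u' : ℕ → ℂ)
    (h : ∀ P, P % 2 = par → P + 1 ≤ r → u P = u' P) :
    UmatP r par u = UmatP r par u' := by
  ext p q
  rcases p with ⟨P, hP⟩
  rcases q with ⟨Q, hQ⟩
  simp only [UmatP, Matrix.of_apply]
  split_ifs with h1 h2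
  · rfl
  · exact h P h2.2 (by omega)
  · rfl

lemma assemble (av : Fin (r + 1) → ℂ) (d1 d2 d3 d4 u1 u2 u3 u4 : ℕ → ℂ)
    (h2 : ∀ P, d2 P ≠ 0) (h3 : ∀ P, d3 P ≠ 0) (h4 : ∀ P, d4 P ≠ 0) :
    Matrix.diagonal av * ((DmatP r d1 * UmatP r 1 u1) * (DmatP r d2 * UmatP r 0 u2)) *
      ((DmatP r d3 * UmatP r 1 u3) * (DmatP r d4 * UmatP r 0 u4)) =
    Matrix.diagonal (fun m => av m * (d1 (m : ℕ) * (d2 (m : ℕ) * (d3 (m : ℕ) * d4 (m : ℕ))))) *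
      UmatP r 1 (shf d4 (shf d3 (shf d2 u1))) * UmatP r 0 (shf d4 (shf d3 u2)) *
      UmatP r 1 (shf d4 u3) * UmatP r 0 u4 := by
  simp only [mul_assoc]
  rw [UD_swap r 1 u3 d4 h4]
  rw [UD_swap r 0 u2 d3 h3, UD_swap r 0 (shf d3 u2) d4 h4]
  rw [UD_swap r 1 u1 d2 h2, UD_swap r 1 (shf d2 u1) d3 h3, UD_swap r 1 (shf d3 (shf d2 u1)) d4 h4]
  simp only [← mul_assoc, DmatP, Matrix.diagonal_mul_diagonal]


lemma ga_block (c : ℕ → ℂ) (hc0 : c 0 = 1) (htop : ∀ j, r < j → c j = 1)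
    (hnz : ∀ j, c j ≠ 0) :
    ((List.range r).map fun t =>
        xm r (jIdx r (r - t)) (c (jIdx r (r - t))) *
          alm r (jIdx r (r - t)) (c (jIdx r (r - t)))).prod
      = DmatP r (dEv c) * UmatP r 1 (uInv c) * (DmatP r (dOd c) * UmatP r 0 (uInv c)) := by
  refine (prod_word r (fun l => xm r l (c l) * alm r l (c l))).trans ?_
  show ((List.range (r / 2)).map fun t =>
      xm r (2 * t + 2) (c (2 * t + 2)) * alm r (2 * t + 2) (c (2 * t + 2))).prod *
    ((List.range ((r + 1) / 2)).map fun t =>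
      xm r (2 * t + 1) (c (2 * t + 1)) * alm r (2 * t + 1) (c (2 * t + 1))).prod = _
  rw [ev_prod r c hc0 hnz (r / 2) (by omega), od_prod r c hnz ((r + 1) / 2) (by omega),
    ev_full r c htop hnz, od_full r c htop hnz]

lemma x_block (φ : ℕ → ℂ) :
    ((List.range r).map fun t => xm r (jIdx r (r - t)) (φ (jIdx r (r - t)))).prod
      = UmatP r 1 (fun P => φ (P + 1)) * UmatP r 0 (fun P => φ (P + 1)) := by
  refine (prod_word r (fun l => xm r l (φ l))).trans ?_
  show ((List.range (r / 2)).map fun t => xm r (2 * t + 2) (φ (2 * t + 2))).prod *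
    ((List.range ((r + 1) / 2)).map fun t => xm r (2 * t + 1) (φ (2 * t + 1))).prod = _
  rw [xev_prod r φ (r / 2) (by omega), xod_prod r φ ((r + 1) / 2) (by omega),
    xev_full, xod_full]

end Aux

/-- `x̄ = x^G_𝐢 ∘ φ`. -/
theorem statement1 (r : ℕ) (hr : 3 ≤ r)
    (a : Fin (r + 1) → ℂˣ) (ha : (∏ m, (a m : ℂ)) = 1) (Y : Fin 2 → Fin r → ℂˣ) :
    xbar r (fun m => (a m : ℂ)) (fun s j => (Y s j : ℂ)) =
      Matrix.diagonal (fun m => (PhiH r a Y m : ℂ)) *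
        (((List.range r).map fun t =>
            xm r (jIdx r (r - t)) ((Phi1 r Y (jIdx r (r - t)) : ℂ))).prod) *
        (((List.range r).map fun t =>
            xm r (jIdx r (r - t)) ((Phi2 r Y (jIdx r (r - t)) : ℂ))).prod) := by
  have hYc : ∀ s j : ℕ, Yc r (fun s j => ((Y s j : ℂ))) s j = ((YcU r Y s j : ℂ)) := by
    intro s j
    unfold Yc YcU
    by_cases h : 1 ≤ s ∧ s ≤ 2 ∧ 1 ≤ j ∧ j ≤ r
    · rw [dif_pos h, dif_pos h]
    · rw [dif_neg h, dif_neg h]; rfl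
  have hnz1 : ∀ j, ((YcU r Y 1 j : ℂ)) ≠ 0 := fun j => Units.ne_zero _
  have hnz2 : ∀ j, ((YcU r Y 2 j : ℂ)) ≠ 0 := fun j => Units.ne_zero _
  have h01 : ((YcU r Y 1 0 : ℂ)) = 1 := by unfold YcU; rw [dif_neg (by omega)]; rfl
  have h02 : ((YcU r Y 2 0 : ℂ)) = 1 := by unfold YcU; rw [dif_neg (by omega)]; rfl
  have htop1 : ∀ j, r < j → ((YcU r Y 1 j : ℂ)) = 1 := by
    intro j hj; unfold YcU; rw [dif_neg (by omega)]; rfl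
  have htop2 : ∀ j, r < j → ((YcU r Y 2 j : ℂ)) = 1 := by
    intro j hj; unfold YcU; rw [dif_neg (by omega)]; rfl
  have hd2 : ∀ P, dOd (fun j => ((YcU r Y 1 j : ℂ))) P ≠ 0 := by
    intro P; unfold dOd; split_ifs
    · exact hnz1 _
    · exact inv_ne_zero (hnz1 _)
  have hd3 : ∀ P, dEv (fun j => ((YcU r Y 2 j : ℂ))) P ≠ 0 := by
    intro P; unfold dEv; split_ifs
    · exact inv_ne_zero (hnz2 _)
    · exact hnz2 _
  have hd4 : ∀ P, dOd (fun j => ((YcU r Y 2 j : ℂ))) P ≠ 0 := by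
    intro P; unfold dOd; split_ifs
    · exact hnz2 _
    · exact inv_ne_zero (hnz2 _)
  unfold xbar
  simp only [hYc]
  simp only [ga_block r (fun j => ((YcU r Y 1 j : ℂ))) h01 htop1 hnz1,
    ga_block r (fun j => ((YcU r Y 2 j : ℂ))) h02 htop2 hnz2,
    x_block r (fun l => ((Phi1 r Y l : ℂ))), x_block r (fun l => ((Phi2 r Y l : ℂ)))]
  rw [assemble r (fun m => ((a m : ℂ))) _ _ _ _ _ _ _ _ hd2 hd3 hd4]
  have eD : Matrix.diagonal (fun m : Fin (r + 1) => (a m : ℂ) *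
      (dEv (fun j => ((YcU r Y 1 j : ℂ))) (m : ℕ) *
        (dOd (fun j => ((YcU r Y 1 j : ℂ))) (m : ℕ) *
          (dEv (fun j => ((YcU r Y 2 j : ℂ))) (m : ℕ) *
            dOd (fun j => ((YcU r Y 2 j : ℂ))) (m : ℕ))))) =
      Matrix.diagonal (fun m => ((PhiH r a Y m : ℂ))) := by
    refine congrArg Matrix.diagonal (funext fun m => ?_)
    simp only [dEv, dOd, PhiH, Units.val_mul, Units.val_inv_eq_inv_val]
    split_ifs with hm <;> (field_simp; try ring1)
  have eU1 : UmatP r 1 (shf (dOd fun j => ((YcU r Y 2 j : ℂ)))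
      (shf (dEv fun j => ((YcU r Y 2 j : ℂ)))
        (shf (dOd fun j => ((YcU r Y 1 j : ℂ))) (uInv fun j => ((YcU r Y 1 j : ℂ)))))) =
      UmatP r 1 (fun P => ((Phi1 r Y (P + 1) : ℂ))) := by
    apply U_congr
    intro P hpar hle
    have h0 : ¬ P % 2 = 0 := by omega
    have h1' : (P + 1) % 2 = 0 := by omega
    simp only [shf, uInv, dEv, dOd, if_pos h1', if_neg h0, Phi1, Nat.add_sub_cancel,
      Units.val_mul, Units.val_inv_eq_inv_val, Units.val_pow_eq_pow_val]
    field_simp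
  have eU2 : UmatP r 0 (shf (dOd fun j => ((YcU r Y 2 j : ℂ)))
      (shf (dEv fun j => ((YcU r Y 2 j : ℂ))) (uInv fun j => ((YcU r Y 1 j : ℂ))))) =
      UmatP r 0 (fun P => ((Phi1 r Y (P + 1) : ℂ))) := by
    apply U_congr
    intro P hpar hle
    have h0 : P % 2 = 0 := hpar
    have h1' : ¬ (P + 1) % 2 = 0 := by omega
    simp only [shf, uInv, dEv, dOd, if_pos h0, if_neg h1', Phi1, Nat.add_sub_cancel,
      Units.val_mul, Units.val_inv_eq_inv_val, Units.val_pow_eq_pow_val]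
    field_simp
  have eU3 : UmatP r 1 (shf (dOd fun j => ((YcU r Y 2 j : ℂ)))
      (uInv fun j => ((YcU r Y 2 j : ℂ)))) =
      UmatP r 1 (fun P => ((Phi2 r Y (P + 1) : ℂ))) := by
    apply U_congr
    intro P hpar hle
    have h0 : ¬ P % 2 = 0 := by omega
    have h1' : (P + 1) % 2 = 0 := by omega
    simp only [shf, uInv, dEv, dOd, if_pos h1', if_neg h0, Phi2, Nat.add_sub_cancel,
      Units.val_mul, Units.val_inv_eq_inv_val]
    field_simp
  have eU4 : UmatP r 0 (uInv fun j => ((YcU r Y 2 j : ℂ))) =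
      UmatP r 0 (fun P => ((Phi2 r Y (P + 1) : ℂ))) := by
    apply U_congr
    intro P hpar hle
    have h1' : ¬ (P + 1) % 2 = 0 := by omega
    simp only [uInv, Phi2, if_neg h1', Units.val_inv_eq_inv_val]
  rw [eD, eU1, eU2, eU3, eU4]
  simp only [mul_assoc]

end DBC
end

section
/- Let k ∈ {⌊(r+1)/2⌋+1,…,r−1} and l ∈ {0,…,r−k−2}, and let μ[l] = (μ_{k−⌊r/2⌋+l}μ_{k+l+1}μ_{k+l})⋯(μ_{k−⌊r/2⌋+1}μ_{k+2}μ_{k+1})(μ_{k−⌊r/2⌋}μ_{k+1}μ_k) (rightmost mutation applied first). Then, as rational functions: (φ^G_{μ_{k+l+2} μ_{k+l+1} μ[l] 𝕍})_{k+l+2}(a;𝐘) = (φ^G_{μ_{k+l+2}𝕍})_{k+l+2}(a;𝐘); that is, the cluster variable at vertex k+l+2 produced after the mutation sequence μ_{k+l+1}μ[l] coincides with the one produced by a single mutation of the initial seed at vertex k+l+2. -/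
open scoped BigOperators

namespace DBC

variable {R : Type _}

/-! ### Auxiliary lemmas for statement 10 -/

lemma jIdx_spec {r n : ℕ} (h1 : 1 ≤ n) (h2 : n ≤ r) :
    (n ≤ (r + 1) / 2 ∧ jIdx r n + 2 * n = 2 * ((r + 1) / 2) + 1) ∨
    ((r + 1) / 2 < n ∧ jIdx r n + 2 * n = 2 * (r + 1)) := by
  have hnr : ¬ r < n := by omega
  simp only [jIdx, if_neg hnr]
  split_ifs <;> omega

lemma jz_spec {r : ℕ} {j : ℤ} (h1 : 1 ≤ j) (h2 : j ≤ (r : ℤ)) :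
    (j ≤ (((r + 1) / 2 : ℕ) : ℤ) ∧ jz r j = 2 * (((r + 1) / 2 : ℕ) : ℤ) + 1 - 2 * j) ∨
    ((((r + 1) / 2 : ℕ) : ℤ) < j ∧ jz r j = 2 * (r : ℤ) + 2 - 2 * j) := by
  have hn : (j.toNat : ℤ) = j := Int.toNat_of_nonneg (by omega)
  have hs := jIdx_spec (r := r) (n := j.toNat) (by omega) (by omega)
  unfold jz
  omega

lemma jz_pos {r : ℕ} {j : ℤ} (h1 : 1 ≤ j) (h2 : j ≤ (r : ℤ)) : 1 ≤ jz r j := by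
  rcases jz_spec h1 h2 with ⟨h, e⟩ | ⟨h, e⟩ <;> omega

lemma not_arr_of {r : ℕ} {j m : ℤ} (hj1 : 1 ≤ j) (hjm : j < m) (hmr : m ≤ (r : ℤ))
    (hd : ¬ (jz r j - jz r m = 1 ∨ jz r m - jz r j = 1)) :
    ¬ arr r j m ∧ ¬ arr r m j := by
  constructor
  · rintro (⟨m', hm1, hm2, (⟨e1, e2⟩ | ⟨e1, e2⟩)⟩ |
      ⟨m1, m2, h1, h2, h3, hdf, (⟨e1, e2⟩ | ⟨e1, e2⟩ | ⟨e1, e2⟩)⟩)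
    · omega
    · have := jz_pos hm1 hm2; omega
    · subst e1; subst e2; exact hd hdf
    · omega
    · have := jz_pos (show (1:ℤ) ≤ m2 by omega) h3; omega
  · rintro (⟨m', hm1, hm2, (⟨e1, e2⟩ | ⟨e1, e2⟩)⟩ |
      ⟨m1, m2, h1, h2, h3, hdf, (⟨e1, e2⟩ | ⟨e1, e2⟩ | ⟨e1, e2⟩)⟩)
    · omega
    · have := jz_pos hm1 hm2; omega
    · omega
    · omega
    · have := jz_pos (show (1:ℤ) ≤ m2 by omega) h3; omega

lemma bmat_vanish {r k l : ℕ} (hr : 3 ≤ r) (hk1 : (r + 1) / 2 + 1 ≤ k) (hl : k + l + 2 ≤ r)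
    {j : ℤ}
    (hj : (∃ t : ℕ, t ≤ l + 1 ∧ j = (k : ℤ) + t) ∨
      (∃ t : ℕ, t ≤ l ∧ j = (k : ℤ) - ((r / 2 : ℕ) : ℤ) + t)) :
    bmat r j ((k : ℤ) + l + 2) = 0 ∧ j ≠ (k : ℤ) + l + 2 := by
  have h1 : 1 ≤ j := by rcases hj with ⟨t, ht, hje⟩ | ⟨t, ht, hje⟩ <;> omega
  have h2 : j < (k : ℤ) + l + 2 := by rcases hj with ⟨t, ht, hje⟩ | ⟨t, ht, hje⟩ <;> omega
  have h3 : (k : ℤ) + l + 2 ≤ (r : ℤ) := by omega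
  have hjr : j ≤ (r : ℤ) := by omega
  have hm := jz_spec (r := r) (j := (k : ℤ) + l + 2) (by omega) h3
  have hjz := jz_spec (r := r) (j := j) h1 hjr
  have hd : ¬ (jz r j - jz r ((k : ℤ) + l + 2) = 1 ∨
      jz r ((k : ℤ) + l + 2) - jz r j = 1) := by
    rcases hj with ⟨t, ht, hje⟩ | ⟨t, ht, hje⟩ <;>
      rcases hm with ⟨hm1, hm2⟩ | ⟨hm1, hm2⟩ <;>
      rcases hjz with ⟨ha, hb⟩ | ⟨ha, hb⟩ <;> omega
  obtain ⟨hA, hB⟩ := not_arr_of h1 h2 h3 hd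
  refine ⟨?_, by omega⟩
  unfold bmat
  rw [if_neg hA, if_neg hB]
  ring

lemma mem_L {r k l : ℕ} {j : ℤ}
    (hj : j ∈ (((k + l + 1 : ℕ) : ℤ) :: muList r k l)) :
    (∃ t : ℕ, t ≤ l + 1 ∧ j = (k : ℤ) + t) ∨
      (∃ t : ℕ, t ≤ l ∧ j = (k : ℤ) - ((r / 2 : ℕ) : ℤ) + t) := by
  rcases List.mem_cons.mp hj with h | h
  · exact Or.inl ⟨l + 1, le_refl _, by push_cast [h]; ring⟩
  · simp only [muList, List.mem_flatten, List.mem_map, List.mem_reverse,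
      List.mem_range] at h
    obtain ⟨lst, ⟨t, ht, rfl⟩, hmem⟩ := h
    simp only [List.mem_cons, List.mem_singleton, List.not_mem_nil, or_false] at hmem
    rcases hmem with h | h | h
    · exact Or.inr ⟨t, by omega, by omega⟩
    · exact Or.inl ⟨t + 1, by omega, by push_cast; omega⟩
    · exact Or.inl ⟨t, by omega, by omega⟩

lemma mutSeq_cons (r : ℕ) (j : ℤ) (ks : List ℤ) (S : (ℤ → KK r) × (ℤ → ℤ → ℤ)) :
    mutSeq r (j :: ks) S = mutate r j (mutSeq r ks S) := rfl

lemma mutate_snd {r : ℕ} (j : ℤ) (S : (ℤ → KK r) × (ℤ → ℤ → ℤ)) (v m : ℤ)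
    (h0 : S.2 j m = 0) (hm : m ≠ j) :
    (mutate r j S).2 v m = S.2 v m := by
  by_cases hv : v = j
  · subst hv
    show (if v = v ∨ m = v then -(S.2 v m) else _) = S.2 v m
    rw [if_pos (Or.inl rfl), h0]; ring
  · show (if v = j ∨ m = j then -(S.2 v m)
        else S.2 v m + (|S.2 v j| * S.2 j m + S.2 v j * |S.2 j m|) / 2) = S.2 v m
    rw [if_neg (by tauto), h0]
    simp

lemma mutate_fst_ne {r : ℕ} (j : ℤ) (S : (ℤ → KK r) × (ℤ → ℤ → ℤ)) (v : ℤ)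
    (hv : v ≠ j) : (mutate r j S).1 v = S.1 v := by
  simp only [mutate, if_neg hv]

lemma mutSeq_fst_notmem {r : ℕ} (ks : List ℤ) (S : (ℤ → KK r) × (ℤ → ℤ → ℤ)) (v : ℤ)
    (hv : v ∉ ks) : (mutSeq r ks S).1 v = S.1 v := by
  induction ks with
  | nil => rfl
  | cons j ks ih =>
    rw [mutSeq_cons, mutate_fst_ne j _ v (fun h => hv (h ▸ List.mem_cons_self)),
      ih (fun h => hv (List.mem_cons_of_mem j h))]

lemma mutSeq_snd {r : ℕ} (m : ℤ) :
    ∀ ks : List ℤ, (∀ j ∈ ks, bmat r j m = 0 ∧ j ≠ m) →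
      ∀ v, (mutSeq r ks (initSeed r)).2 v m = bmat r v m
  | [], _, v => rfl
  | j :: ks, hks, v => by
    have hks' : ∀ x ∈ ks, bmat r x m = 0 ∧ x ≠ m :=
      fun x hx => hks x (List.mem_cons_of_mem j hx)
    have hj := hks j List.mem_cons_self
    have h0 : (mutSeq r ks (initSeed r)).2 j m = 0 := by
      rw [mutSeq_snd m ks hks' j]; exact hj.1
    rw [mutSeq_cons, mutate_snd j _ v m h0 (Ne.symm hj.2), mutSeq_snd m ks hks' v]

lemma mutate_fst_self {r : ℕ} (m : ℤ) (S : (ℤ → KK r) × (ℤ → ℤ → ℤ)) :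
    (mutate r m S).1 m =
      ((∏ w ∈ VFin r, if 0 < S.2 w m then S.1 w ^ (S.2 w m).toNat else 1) +
       (∏ w ∈ VFin r, if S.2 w m < 0 then S.1 w ^ (-(S.2 w m)).toNat else 1)) / S.1 m := by
  simp [mutate]

/-- the cluster variable at vertex `k+l+2` produced after the mutation
sequence `μ_{k+l+1} μ[l]` coincides with the one produced by a single mutation of the
initial seed at vertex `k+l+2`. -/
theorem statement10 (r : ℕ) (hr : 3 ≤ r) (k l : ℕ)
    (hk1 : (r + 1) / 2 + 1 ≤ k) (hk2 : k + 1 ≤ r) (hl : k + l + 2 ≤ r) :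
    cvar r (((k + l + 2 : ℕ) : ℤ) :: ((k + l + 1 : ℕ) : ℤ) :: muList r k l)
        ((k + l + 2 : ℕ) : ℤ) =
      cvar r [((k + l + 2 : ℕ) : ℤ)] ((k + l + 2 : ℕ) : ℤ) := by
  set m : ℤ := ((k + l + 2 : ℕ) : ℤ) with hmdef
  have hmc : m = (k : ℤ) + l + 2 := by push_cast [hmdef]; ring
  set L : List ℤ := ((k + l + 1 : ℕ) : ℤ) :: muList r k l with hLdef
  have hL : ∀ j ∈ L, bmat r j m = 0 ∧ j ≠ m := by
    intro j hj
    rw [hmc]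
    exact bmat_vanish hr hk1 hl (mem_L hj)
  set S : (ℤ → KK r) × (ℤ → ℤ → ℤ) := mutSeq r L (initSeed r) with hSdef
  have hS2 : ∀ v, S.2 v m = bmat r v m := fun v => mutSeq_snd m L hL v
  have hS1 : ∀ v, bmat r v m ≠ 0 → S.1 v = (initSeed r).1 v := by
    intro v hv
    exact mutSeq_fst_notmem L _ v (fun hmem => hv (hL v hmem).1)
  have hS1m : S.1 m = (initSeed r).1 m :=
    mutSeq_fst_notmem L _ m (fun hmem => ((hL m hmem).2 rfl))
  have hinit2 : ∀ v w : ℤ, (initSeed r).2 v w = bmat r v w := fun _ _ => rfl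
  have e1 : cvar r (m :: L) m = (mutate r m S).1 m := rfl
  have e2 : cvar r [m] m = (mutate r m (initSeed r)).1 m := rfl
  rw [e1, e2, mutate_fst_self, mutate_fst_self, hS1m]
  congr 1
  congr 1
  · refine Finset.prod_congr rfl (fun w _ => ?_)
    rw [hS2 w, hinit2 w m]
    by_cases h : 0 < bmat r w m
    · rw [if_pos h, if_pos h, hS1 w (by omega)]
    · rw [if_neg h, if_neg h]
  · refine Finset.prod_congr rfl (fun w _ => ?_)
    rw [hS2 w, hinit2 w m]
    by_cases h : bmat r w m < 0
    · rw [if_pos h, if_pos h, hS1 w (by omega)]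
    · rw [if_neg h, if_neg h]

end DBC
end

section
/- Let k ∈ {⌊(r+1)/2⌋+1,…,r−1}, l ∈ {0,…,r−k−1}, p ≥ 0, and (𝐛,𝐜) ∈ R^p_{l−1} (for p = 0 take the empty pair, with all products over i empty and [𝐛,𝐜] = ∅; for l = 0 only p = 0 occurs). Set H_1 = (∏_{t=0}^{l−1}Y_{1,j_k−2t−2})·(∏_{t=0}^{l}Y_{2,j_k−2t−1}) and H_1[𝐛,𝐜] = H_1·∏_{i=1}^{p}A[b_i,c_i;j_k], and let q_1 < q_2 < ⋯ < q_m be the elements of {0,…,l−1}∖[𝐛,𝐜]. Then the set 𝔇(𝐛,𝐜) = { f̃_{j_k−2q_1−2}^{c′_1} f̃_{j_k−2q_2−2}^{c′_2} ⋯ f̃_{j_k−2q_m−2}^{c′_m} (H_1[𝐛,𝐜]) : c′_1,…,c′_m ∈ ℤ_{≥0} } ∖ {0} is finite, its elements are pairwise distinct Laurent monomials, and one has the Laurent polynomial identity H_1[𝐛,𝐜] · ∏_{q∈{0,…,l−1}∖[𝐛,𝐜]}(1+A_{1,j_k−2q−2}^{−1}) = Σ_{M ∈ 𝔇(𝐛,𝐜)}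 M. (𝔇(𝐛,𝐜) is the monomial realization of the Demazure crystal B((Σ_{s=j_k−2l−1}^{j_k−1}Λ_s) − α[𝐛,𝐜;j_k])_{w} for w = ∏_{q∈{0,…,l−1}∖[𝐛,𝐜]} s_{j_k−2q−2}, with highest weight vector realized by H_1[𝐛,𝐜]; combined with the mutation formula for (φ^G_{μ[l]𝕍})_{k−⌊r/2⌋+l}, this expresses that cluster variable as the total sum of monomials of a direct sum of Demazure crystals.) -/
open scoped BigOperators

namespace DBC

variable {R : Type _}

/-! ### Exponent vectors for Statement 19 -/

noncomputable def YexpMz (r : ℕ) (s : ℤ) (j : ℤ) : Mon r :=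
  if 0 ≤ j then YexpM r s j.toNat else 0

/-- The exponent vector of `A_{1,j}` (`0` out of range, i.e. `A_{1,j} = 1`). -/
noncomputable def AexpMz (r : ℕ) (j : ℤ) : Mon r :=
  if 1 ≤ j ∧ j ≤ (r : ℤ) then AexpM r 1 j.toNat else 0

/-- The exponent vector of `A[b,c;x]`. -/
noncomputable def AbrExpM (r : ℕ) (b c x : ℤ) : Mon r :=
  -(∑ s ∈ Finset.Ico b c, (AexpMz r (x - 2 * s - 2) + AexpMz r (x - 2 * s - 3)))
    - AexpMz r (x - 2 * c - 2)

/-- The exponent vector of the monomial `H_1`. -/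
noncomputable def H1Exp (r k l : ℕ) : Mon r :=
  (∑ t ∈ Finset.range l, YexpMz r 1 ((jIdx r k : ℤ) - 2 * t - 2)) +
    (∑ t ∈ Finset.range (l + 1), YexpMz r 2 ((jIdx r k : ℤ) - 2 * t - 1))

/-- The exponent vector of the monomial `H_1[𝐛,𝐜] = H_1 ⋅ ∏ᵢ A[bᵢ,cᵢ;j_k]`. -/
noncomputable def H1bcExp (r k l : ℕ) (p : ℕ) (b c : Fin p → ℤ) : Mon r :=
  H1Exp r k l + ∑ i, AbrExpM r (b i) (c i) (jIdx r k)

/-- The set `𝔇(𝐛,𝐜) = { f̃_{j_k-2q_1-2}^{c′_1} ⋯ f̃_{j_k-2q_m-2}^{c′_m} (H_1[𝐛,𝐜]) } ∖ {0}`,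
where `q_1 < ⋯ < q_m` are the elements of `{0,…,l-1} ∖ [𝐛,𝐜]`
(the innermost operator `f̃_{j_k-2q_m-2}` is applied first). -/
noncomputable def Dem19 (r k l : ℕ) (p : ℕ) (b c : Fin p → ℤ) : Set (Mon r) :=
  { M | ∃ c' : ℕ → ℕ,
      (((((Finset.range l).filter fun q : ℕ => ¬ inBC p b c ((q : ℕ) : ℤ)).sort (· ≤ ·)).reverse).foldl
        (fun x q => (ftil r (jIdx r k - 2 * q - 2))^[c' q] x)
        (some (H1bcExp r k l p b c))) = some M }

/-! ### Auxiliary development for Statement 19 -/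

/-- The monomial `H_1[𝐛,𝐜] ⋅ ∏_{q ∈ S} A_{1,j_k-2q-2}^{-1}`. -/
noncomputable def MSet (r k l p : ℕ) (b c : Fin p → ℤ) (S : Finset ℕ) : Mon r :=
  H1bcExp r k l p b c - ∑ q ∈ S, AexpMz r ((jIdx r k : ℤ) - 2 * q - 2)

lemma Yapp (r : ℕ) (s t : ℤ) (jn : ℕ) (y : Fin r) :
    (YexpM r s jn) (t, y) = if s = t ∧ jn = (y : ℕ) + 1 then 1 else 0 := by
  unfold YexpM
  by_cases h : 1 ≤ jn ∧ jn ≤ r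
  · rw [dif_pos h, Finsupp.single_apply]
    simp only [Prod.mk.injEq, Fin.ext_iff]
    refine if_congr (and_congr_right fun _ => ?_) rfl rfl
    omega
  · rw [dif_neg h, if_neg, Finsupp.coe_zero, Pi.zero_apply]
    rintro ⟨-, h2⟩
    exact h ⟨by omega, by have := y.isLt; omega⟩

lemma Yzapp (r : ℕ) (s t : ℤ) (z : ℤ) (y : Fin r) :
    (YexpMz r s z) (t, y) = if s = t ∧ z = (y : ℕ) + 1 then 1 else 0 := by
  unfold YexpMz
  by_cases h : 0 ≤ z
  · rw [if_pos h, Yapp]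
    refine if_congr (and_congr_right fun _ => ?_) rfl rfl
    omega
  · rw [if_neg h, if_neg, Finsupp.coe_zero, Pi.zero_apply]
    rintro ⟨-, h2⟩; omega

set_option maxHeartbeats 1000000 in
lemma Azapp (r : ℕ) (t : ℤ) (z : ℤ) (y : Fin r) :
    (AexpMz r z) (t, y) =
      if z = (y : ℕ) + 1 then ((if t = 1 then 1 else 0) + (if t = 2 then 1 else 0))
      else if (z = (y : ℕ) + 2 ∨ z = (y : ℕ)) ∧ 1 ≤ z ∧ z ≤ (r : ℤ) then
        (if z % 2 = 1 then (if t = 2 then -1 else 0) else (if t = 1 then -1 else 0))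
      else 0 := by
  have hy : (y : ℕ) < r := y.isLt
  unfold AexpMz
  by_cases h : 1 ≤ z ∧ z ≤ (r : ℤ)
  · rw [if_pos h]
    have hzn : (z.toNat : ℤ) = z := Int.toNat_of_nonneg (by omega)
    set n := z.toNat with hn
    unfold AexpM
    by_cases hpar : n % 2 = 1
    · rw [if_pos hpar, Finsupp.sub_apply, Finsupp.add_apply, Finsupp.add_apply,
        Yapp, Yapp, Yapp, Yapp]
      split_ifs <;> omega
    · rw [if_neg hpar, Finsupp.sub_apply, Finsupp.add_apply, Finsupp.add_apply,
        Yapp, Yapp, Yapp, Yapp]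
      split_ifs <;> omega
  · rw [if_neg h, Finsupp.coe_zero, Pi.zero_apply]
    rw [if_neg, if_neg]
    · rintro ⟨-, h2⟩; exact h h2
    · intro h2; exact h ⟨by omega, by omega⟩

lemma rowZeroY (r : ℕ) (s t : ℤ) (z : ℤ) (y : Fin r) (hst : s ≠ t) :
    (YexpMz r s z) (t, y) = 0 := by
  rw [Yzapp, if_neg]; rintro ⟨h1, -⟩; exact hst h1

lemma rowZeroA (r : ℕ) (t : ℤ) (z : ℤ) (y : Fin r) (h1 : t ≠ 1) (h2 : t ≠ 2) :
    (AexpMz r z) (t, y) = 0 := by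
  rw [Azapp]; split_ifs <;> simp [h1, h2]

lemma rowZeroMSet (r k l p : ℕ) (b c : Fin p → ℤ) (S : Finset ℕ) (t : ℤ) (y : Fin r)
    (h1 : t ≠ 1) (h2 : t ≠ 2) : (MSet r k l p b c S) (t, y) = 0 := by
  have h1' : (1 : ℤ) ≠ t := fun h => h1 h.symm
  have h2' : (2 : ℤ) ≠ t := fun h => h2 h.symm
  unfold MSet H1bcExp H1Exp AbrExpM
  rw [Finsupp.sub_apply, Finsupp.add_apply, Finsupp.add_apply,
    Finsupp.finset_sum_apply, Finsupp.finset_sum_apply, Finsupp.finset_sum_apply,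
    Finsupp.finset_sum_apply]
  have e1 : ∀ x ∈ Finset.range l, (YexpMz r 1 ((jIdx r k : ℤ) - 2 * x - 2)) (t, y) = 0 :=
    fun x _ => rowZeroY r 1 t _ y h1'
  have e2 : ∀ x ∈ Finset.range (l + 1), (YexpMz r 2 ((jIdx r k : ℤ) - 2 * x - 1)) (t, y) = 0 :=
    fun x _ => rowZeroY r 2 t _ y h2'
  rw [Finset.sum_eq_zero e1, Finset.sum_eq_zero e2]
  have e3 : ∀ i ∈ (Finset.univ : Finset (Fin p)),
      (-(∑ s ∈ Finset.Ico (b i) (c i),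
          (AexpMz r ((jIdx r k : ℤ) - 2 * s - 2) + AexpMz r ((jIdx r k : ℤ) - 2 * s - 3)))
        - AexpMz r ((jIdx r k : ℤ) - 2 * (c i) - 2)) (t, y) = 0 := by
    intro i _
    rw [Finsupp.sub_apply, Finsupp.neg_apply, Finsupp.finset_sum_apply, rowZeroA r t _ y h1 h2]
    rw [Finset.sum_eq_zero (fun s _ => by
      rw [Finsupp.add_apply, rowZeroA r t _ y h1 h2, rowZeroA r t _ y h1 h2, add_zero])]
    simp
  have e4 : ∀ q ∈ S, (AexpMz r ((jIdx r k : ℤ) - 2 * q - 2)) (t, y) = 0 :=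
    fun q _ => rowZeroA r t _ y h1 h2
  rw [Finset.sum_eq_zero e3, Finset.sum_eq_zero e4]
  simp

lemma valMSet (r k l p : ℕ) (b c : Fin p → ℤ)
    (hb : ∀ i, b i < c i ∧ 0 ≤ b i ∧ c i ≤ (l : ℤ) - 1)
    (q : ℕ) (hq : q < l) (hqbc : ¬ inBC p b c (q : ℤ)) (S : Finset ℕ)
    (y : Fin r) (hy : (y : ℕ) + 1 + (2 * q + 2) = jIdx r k) (t : ℤ) :
    (MSet r k l p b c S) (t, y) =
      if t = 1 then (if q ∈ S then 0 else 1)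
      else if t = 2 then (if q ∈ S then -1 else 0) else 0 := by
  have hv : ((y : ℕ) : ℤ) + 1 = (jIdx r k : ℤ) - 2 * q - 2 := by omega
  unfold MSet H1bcExp H1Exp AbrExpM
  rw [Finsupp.sub_apply, Finsupp.add_apply, Finsupp.add_apply,
    Finsupp.finset_sum_apply, Finsupp.finset_sum_apply, Finsupp.finset_sum_apply,
    Finsupp.finset_sum_apply]
  -- first H1 sum
  have e1 : (∑ x ∈ Finset.range l, (YexpMz r 1 ((jIdx r k : ℤ) - 2 * x - 2)) (t, y))
      = if t = 1 then 1 else 0 := by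
    have : ∀ x ∈ Finset.range l,
        (YexpMz r 1 ((jIdx r k : ℤ) - 2 * x - 2)) (t, y)
        = if x = q then (if t = 1 then 1 else 0) else 0 := by
      intro x _
      rw [Yzapp]
      split_ifs <;> omega
    rw [Finset.sum_congr rfl this, Finset.sum_ite_eq' (Finset.range l) q
      (fun _ => if t = 1 then (1:ℤ) else 0), if_pos (Finset.mem_range.2 hq)]
  -- second H1 sum
  have e2 : (∑ x ∈ Finset.range (l+1), (YexpMz r 2 ((jIdx r k : ℤ) - 2 * x - 1)) (t, y)) = 0 := by
    refine Finset.sum_eq_zero fun x _ => ?_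
    rw [Yzapp, if_neg]
    rintro ⟨-, h2⟩; omega
  -- Abr sums vanish
  have e3 : ∀ i ∈ (Finset.univ : Finset (Fin p)),
      (-(∑ s ∈ Finset.Ico (b i) (c i),
          (AexpMz r ((jIdx r k : ℤ) - 2 * s - 2) + AexpMz r ((jIdx r k : ℤ) - 2 * s - 3)))
        - AexpMz r ((jIdx r k : ℤ) - 2 * (c i) - 2)) (t, y) = 0 := by
    intro i _
    have hbi := hb i
    have hqi : ¬ (b i ≤ (q : ℤ) ∧ (q : ℤ) ≤ c i) := fun h => hqbc ⟨i, h⟩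
    rw [Finsupp.sub_apply, Finsupp.neg_apply, Finsupp.finset_sum_apply]
    have t1 : (∑ s ∈ Finset.Ico (b i) (c i),
        (AexpMz r ((jIdx r k : ℤ) - 2 * s - 2) + AexpMz r ((jIdx r k : ℤ) - 2 * s - 3)) (t, y)) = 0 := by
      refine Finset.sum_eq_zero fun s hs => ?_
      have hs' := Finset.mem_Ico.1 hs
      rw [Finsupp.add_apply, Azapp, Azapp]
      split_ifs <;> omega
    have t2 : (AexpMz r ((jIdx r k : ℤ) - 2 * (c i) - 2)) (t, y) = 0 := by
      rw [Azapp]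
      split_ifs <;> omega
    rw [t1, t2]; simp
  have e4 : (∑ q' ∈ S, (AexpMz r ((jIdx r k : ℤ) - 2 * q' - 2)) (t, y))
      = if q ∈ S then ((if t = 1 then 1 else 0) + (if t = 2 then 1 else 0)) else 0 := by
    have : ∀ q' ∈ S, (AexpMz r ((jIdx r k : ℤ) - 2 * q' - 2)) (t, y)
        = if q' = q then ((if t = 1 then 1 else 0) + (if t = 2 then 1 else 0)) else 0 := by
      intro q' _
      rw [Azapp]
      split_ifs <;> omega
    rw [Finset.sum_congr rfl this, Finset.sum_ite_eq' S q _]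
  rw [e1, e2, Finset.sum_eq_zero e3, e4]
  split_ifs <;> omega

lemma psum_eq (r : ℕ) (M : Mon r) (h12 : ∀ x : ℤ × Fin r, x.1 ≠ 1 → x.1 ≠ 2 → M x = 0)
    (i : ℕ) (y : Fin r) (hy : (y : ℕ) + 1 = i) (s : ℤ) :
    psum r M i s = (if 1 ≤ s then M (1, y) else 0) + (if 2 ≤ s then M (2, y) else 0) := by
  unfold psum
  have hsub : M.support.filter (fun x => ((x.2 : ℕ) + 1 = i) ∧ x.1 ≤ s)
      ⊆ ({((1 : ℤ), y), ((2 : ℤ), y)} : Finset (ℤ × Fin r)).filter (fun x => x.1 ≤ s) := by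
    intro x hx
    obtain ⟨hxs, hxc, hxl⟩ := Finset.mem_filter.1 hx
    have hx1 : x.1 = 1 ∨ x.1 = 2 := by
      by_contra hc
      push_neg at hc
      exact (Finsupp.mem_support_iff.1 hxs) (h12 x hc.1 hc.2)
    have hx2 : x.2 = y := Fin.ext (by omega)
    refine Finset.mem_filter.2 ⟨?_, hxl⟩
    rcases hx1 with h1 | h1
    · exact Finset.mem_insert.2 (Or.inl (by rw [← h1, ← hx2]))
    · exact Finset.mem_insert.2 (Or.inr (Finset.mem_singleton.2 (by rw [← h1, ← hx2])))
  rw [Finset.sum_subset hsub]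
  · rw [Finset.sum_filter, Finset.sum_pair (by simp : ((1 : ℤ), y) ≠ ((2 : ℤ), y))]
  · intro x hx hxn
    by_contra hne
    have hxs : x ∈ M.support := Finsupp.mem_support_iff.2 (fun h => hne (by simp [h]))
    have hxf := Finset.mem_filter.1 hx
    have hx12 : x.1 = 1 ∨ x.1 = 2 := by
      rcases Finset.mem_insert.1 hxf.1 with h | h
      · exact Or.inl (by rw [h])
      · exact Or.inr (by rw [Finset.mem_singleton.1 h])
    have hx2 : x.2 = y := by
      rcases Finset.mem_insert.1 hxf.1 with h | h
      · rw [h]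
      · rw [Finset.mem_singleton.1 h]
    exact hxn (Finset.mem_filter.2 ⟨hxs, by rw [hx2]; exact hy, hxf.2⟩)

lemma phi_one (r : ℕ) (M : Mon r) (h12 : ∀ x : ℤ × Fin r, x.1 ≠ 1 → x.1 ≠ 2 → M x = 0)
    (i : ℕ) (y : Fin r) (hy : (y : ℕ) + 1 = i)
    (hM1 : M (1, y) = 1) (hM2 : M (2, y) = 0) :
    phiIM r M i = 1 ∧ nfM r M i = 1 := by
  have hps : ∀ s : ℤ, psum r M i s = if 1 ≤ s then 1 else 0 := by
    intro s
    rw [psum_eq r M h12 i y hy s, hM1, hM2]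
    split_ifs <;> omega
  have h1supp : ((1 : ℤ), y) ∈ M.support := Finsupp.mem_support_iff.2 (by rw [hM1]; exact one_ne_zero)
  have hphi : phiIM r M i = 1 := by
    unfold phiIM
    refine le_antisymm (Finset.max'_le _ _ _ ?_) (Finset.le_max' _ 1 ?_)
    · intro v hv
      rcases Finset.mem_insert.1 hv with h | h
      · omega
      · obtain ⟨s, -, rfl⟩ := Finset.mem_image.1 h
        rw [hps]; split_ifs <;> omega
    · refine Finset.mem_insert.2 (Or.inr (Finset.mem_image.2 ⟨1, ?_, by rw [hps]; norm_num⟩))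
      exact Finset.mem_image.2 ⟨((1 : ℤ), y), h1supp, rfl⟩
  refine ⟨hphi, ?_⟩
  unfold nfM
  set F := (((M.support.filter fun x => (x.2 : ℕ) + 1 = i).image Prod.fst).filter
    fun s => psum r M i s = phiIM r M i) with hF
  have h1F : (1 : ℤ) ∈ F := by
    refine Finset.mem_filter.2 ⟨?_, by rw [hps, hphi]; norm_num⟩
    exact Finset.mem_image.2 ⟨((1 : ℤ), y), Finset.mem_filter.2 ⟨h1supp, hy⟩, rfl⟩
  have hne : F.Nonempty := ⟨1, h1F⟩
  have hbound : ∀ x ∈ F, (1 : ℤ) ≤ x := by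
    intro x hx
    obtain ⟨x', hx', rfl⟩ := Finset.mem_image.1 (Finset.mem_filter.1 hx).1
    have hx's : x' ∈ M.support := (Finset.mem_filter.1 hx').1
    by_contra hc
    have h1 : x'.1 ≠ 1 := by omega
    have h2 : x'.1 ≠ 2 := by omega
    exact Finsupp.mem_support_iff.1 hx's (h12 x' h1 h2)
  have hmin : F.min' hne = 1 := le_antisymm (Finset.min'_le F 1 h1F) (Finset.le_min' F hne 1 hbound)
  rw [← Finset.coe_min' hne, hmin]
  exact WithTop.untopD_coe _ _

lemma phi_zero (r : ℕ) (M : Mon r) (h12 : ∀ x : ℤ × Fin r, x.1 ≠ 1 → x.1 ≠ 2 → M x = 0)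
    (i : ℕ) (y : Fin r) (hy : (y : ℕ) + 1 = i)
    (hM1 : M (1, y) = 0) (hM2 : M (2, y) = -1) :
    phiIM r M i = 0 := by
  have hps : ∀ s : ℤ, psum r M i s = if 2 ≤ s then -1 else 0 := by
    intro s
    rw [psum_eq r M h12 i y hy s, hM1, hM2]
    split_ifs <;> omega
  unfold phiIM
  refine le_antisymm (Finset.max'_le _ _ _ ?_) (Finset.le_max' _ 0 (Finset.mem_insert_self _ _))
  intro v hv
  rcases Finset.mem_insert.1 hv with h | h
  · omega
  · obtain ⟨s, -, rfl⟩ := Finset.mem_image.1 h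
    rw [hps]; split_ifs <;> omega

lemma AexpMz_eq (r : ℕ) (j q : ℕ) (h1 : 2 * q + 3 ≤ j) (h2 : j ≤ r) :
    AexpMz r ((j : ℤ) - 2 * q - 2) = AexpM r 1 (j - 2 * q - 2) := by
  unfold AexpMz
  rw [if_pos (by omega : (1 : ℤ) ≤ (j : ℤ) - 2 * q - 2 ∧ (j : ℤ) - 2 * q - 2 ≤ (r : ℤ))]
  congr 1
  omega

lemma ftil_step (r k l p : ℕ) (b c : Fin p → ℤ)
    (hb : ∀ i, b i < c i ∧ 0 ≤ b i ∧ c i ≤ (l : ℤ) - 1)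
    (hj2 : 2 * l + 2 ≤ jIdx r k) (hjr : jIdx r k ≤ r)
    (q : ℕ) (hq : q < l) (hqbc : ¬ inBC p b c (q : ℤ)) (S : Finset ℕ) :
    (q ∉ S → ftil r (jIdx r k - 2 * q - 2) (some (MSet r k l p b c S)) =
        some (MSet r k l p b c (insert q S))) ∧
    (q ∈ S → ftil r (jIdx r k - 2 * q - 2) (some (MSet r k l p b c S)) = none) := by
  set j := jIdx r k with hj
  set i := j - 2 * q - 2 with hi
  have hyr : j - 2 * q - 3 < r := by omega
  set y : Fin r := ⟨j - 2 * q - 3, hyr⟩ with hyy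
  have hyv : (y : ℕ) = j - 2 * q - 3 := rfl
  have hy : (y : ℕ) + 1 = i := by omega
  have hy' : (y : ℕ) + 1 + (2 * q + 2) = j := by omega
  set M := MSet r k l p b c S with hM
  have h12 : ∀ x : ℤ × Fin r, x.1 ≠ 1 → x.1 ≠ 2 → M x = 0 := by
    rintro ⟨t, y'⟩ h1 h2
    exact rowZeroMSet r k l p b c S t y' h1 h2
  have hval := valMSet r k l p b c hb q hq hqbc S y hy'
  constructor
  · intro hqS
    have hM1 : M (1, y) = 1 := by rw [hval 1]; simp [hqS]
    have hM2 : M (2, y) = 0 := by rw [hval 2]; simp [hqS]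
    obtain ⟨hphi, hnf⟩ := phi_one r M h12 i y hy hM1 hM2
    show ftil r i (some M) = _
    simp only [ftil]
    rw [if_pos (by rw [hphi]; norm_num), hnf]
    congr 1
    rw [hM]
    unfold MSet
    rw [Finset.sum_insert hqS, AexpMz_eq r j q (by omega) hjr]
    have : j - 2 * q - 2 = i := rfl
    rw [this]
    abel
  · intro hqS
    have hM1 : M (1, y) = 0 := by rw [hval 1]; simp [hqS]
    have hM2 : M (2, y) = -1 := by rw [hval 2]; simp [hqS]
    have hphi := phi_zero r M h12 i y hy hM1 hM2
    show ftil r i (some M) = _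
    simp only [ftil]
    rw [if_neg (by rw [hphi]; norm_num)]

lemma ftil_none_iter (r i n : ℕ) : (ftil r i)^[n] none = none :=
  Function.iterate_fixed rfl n

lemma foldl_none (r k : ℕ) (c' : ℕ → ℕ) (L : List ℕ) :
    L.foldl (fun x q => (ftil r (jIdx r k - 2 * q - 2))^[c' q] x) none = none := by
  induction L with
  | nil => rfl
  | cons q L ih => simpa [ftil_none_iter] using ih

lemma foldl_complete (r k l p : ℕ) (b c : Fin p → ℤ)
    (hb : ∀ i, b i < c i ∧ 0 ≤ b i ∧ c i ≤ (l : ℤ) - 1)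
    (hj2 : 2 * l + 2 ≤ jIdx r k) (hjr : jIdx r k ≤ r) :
    ∀ (L : List ℕ), L.Nodup → (∀ q ∈ L, q < l ∧ ¬ inBC p b c (q : ℤ)) →
    ∀ (S : Finset ℕ), (∀ q ∈ L, q ∉ S) → ∀ (c' : ℕ → ℕ) (M : Mon r),
    L.foldl (fun x q => (ftil r (jIdx r k - 2 * q - 2))^[c' q] x)
      (some (MSet r k l p b c S)) = some M →
    ∃ T : Finset ℕ, M = MSet r k l p b c T ∧ T ⊆ S ∪ L.toFinset := by
  intro L
  induction L with
  | nil =>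
    intro _ _ S _ c' M hM
    exact ⟨S, (Option.some.injEq _ _ ▸ hM).symm, by simp⟩
  | cons q L ih =>
    intro hnd hmem S hS c' M hM
    have hq := hmem q (List.mem_cons_self)
    have hstep := ftil_step r k l p b c hb hj2 hjr q hq.1 hq.2 S
    rw [List.foldl_cons] at hM
    have hqS : q ∉ S := hS q (List.mem_cons_self)
    match hc : c' q with
    | 0 =>
      rw [hc, Function.iterate_zero_apply] at hM
      obtain ⟨T, hT1, hT2⟩ := ih (List.nodup_cons.1 hnd).2
        (fun q' hq' => hmem q' (List.mem_cons_of_mem q hq')) S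
        (fun q' hq' => hS q' (List.mem_cons_of_mem q hq')) c' M hM
      exact ⟨T, hT1, hT2.trans (by intro x hx; simp at hx ⊢; tauto)⟩
    | 1 =>
      rw [hc, Function.iterate_one] at hM
      rw [hstep.1 hqS] at hM
      have hS' : ∀ q' ∈ L, q' ∉ insert q S := by
        intro q' hq' hq'S
        rcases Finset.mem_insert.1 hq'S with h | h
        · exact (List.nodup_cons.1 hnd).1 (h ▸ hq')
        · exact hS q' (List.mem_cons_of_mem q hq') h
      obtain ⟨T, hT1, hT2⟩ := ih (List.nodup_cons.1 hnd).2
        (fun q' hq' => hmem q' (List.mem_cons_of_mem q hq')) (insert q S) hS' c' M hM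
      refine ⟨T, hT1, hT2.trans ?_⟩
      intro x hx; simp at hx ⊢; tauto
    | n + 2 =>
      exfalso
      rw [hc] at hM
      rw [Function.iterate_add_apply _ n 2 _] at hM
      have h2 : (ftil r (jIdx r k - 2 * q - 2))^[2] (some (MSet r k l p b c S)) = none := by
        have e : (ftil r (jIdx r k - 2 * q - 2))^[2] (some (MSet r k l p b c S))
            = ftil r (jIdx r k - 2 * q - 2)
                (ftil r (jIdx r k - 2 * q - 2) (some (MSet r k l p b c S))) := rfl
        rw [e, hstep.1 hqS]
        exact (ftil_step r k l p b c hb hj2 hjr q hq.1 hq.2 (insert q S)).2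
          (Finset.mem_insert_self q S)
      rw [h2, ftil_none_iter, foldl_none] at hM
      exact Option.some_ne_none M hM.symm

lemma foldl_exists (r k l p : ℕ) (b c : Fin p → ℤ)
    (hb : ∀ i, b i < c i ∧ 0 ≤ b i ∧ c i ≤ (l : ℤ) - 1)
    (hj2 : 2 * l + 2 ≤ jIdx r k) (hjr : jIdx r k ≤ r) :
    ∀ (L : List ℕ), L.Nodup → (∀ q ∈ L, q < l ∧ ¬ inBC p b c (q : ℤ)) →
    ∀ (S : Finset ℕ), (∀ q ∈ L, q ∉ S) → ∀ (T : Finset ℕ), T ⊆ L.toFinset →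
    ∀ (c' : ℕ → ℕ), (∀ q ∈ L, c' q = if q ∈ T then 1 else 0) →
    L.foldl (fun x q => (ftil r (jIdx r k - 2 * q - 2))^[c' q] x)
      (some (MSet r k l p b c S)) = some (MSet r k l p b c (S ∪ T)) := by
  intro L
  induction L with
  | nil =>
    intro _ _ S _ T hT c' _
    have : T = ∅ := Finset.subset_empty.1 (by simpa using hT)
    rw [this, Finset.union_empty]
    rfl
  | cons q L ih =>
    intro hnd hmem S hS T hT c' hc'
    have hq := hmem q (List.mem_cons_self)
    have hqS : q ∉ S := hS q (List.mem_cons_self)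
    have hstep := ftil_step r k l p b c hb hj2 hjr q hq.1 hq.2 S
    rw [List.foldl_cons]
    rw [hc' q (List.mem_cons_self)]
    by_cases hqT : q ∈ T
    · rw [if_pos hqT, Function.iterate_one, hstep.1 hqS]
      have hS' : ∀ q' ∈ L, q' ∉ insert q S := by
        intro q' hq' hq'S
        rcases Finset.mem_insert.1 hq'S with h | h
        · exact (List.nodup_cons.1 hnd).1 (h ▸ hq')
        · exact hS q' (List.mem_cons_of_mem q hq') h
      have hT' : T.erase q ⊆ L.toFinset := by
        intro x hx
        have hx1 := Finset.mem_erase.1 hx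
        have := hT hx1.2
        simp at this
        rcases this with h | h
        · exact absurd h hx1.1
        · simpa using h
      have hc'' : ∀ q' ∈ L, c' q' = if q' ∈ T.erase q then 1 else 0 := by
        intro q' hq'
        rw [hc' q' (List.mem_cons_of_mem q hq')]
        have hne : q' ≠ q := fun h => (List.nodup_cons.1 hnd).1 (h ▸ hq')
        simp [Finset.mem_erase, hne]
      have := ih (List.nodup_cons.1 hnd).2
        (fun q' hq' => hmem q' (List.mem_cons_of_mem q hq')) (insert q S) hS'
        (T.erase q) hT' c' hc''
      rw [this]
      congr 2
      ext x
      simp only [Finset.mem_union, Finset.mem_insert, Finset.mem_erase]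
      constructor
      · rintro (⟨rfl | h⟩ | ⟨h1, h2⟩)
        · exact Or.inr hqT
        · tauto
        · tauto
      · rintro (h | h)
        · tauto
        · by_cases hx : x = q
          · exact Or.inl (Or.inl hx)
          · exact Or.inr ⟨hx, h⟩
    · rw [if_neg hqT, Function.iterate_zero_apply]
      have hT' : T ⊆ L.toFinset := by
        intro x hx
        have := hT hx
        simp at this
        rcases this with h | h
        · exact absurd (h ▸ hx) hqT
        · simpa using h
      exact ih (List.nodup_cons.1 hnd).2
        (fun q' hq' => hmem q' (List.mem_cons_of_mem q hq')) S
        (fun q' hq' => hS q' (List.mem_cons_of_mem q hq')) T hT' c'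
        (fun q' hq' => hc' q' (List.mem_cons_of_mem q hq'))

lemma MSet_inj (r k l p : ℕ) (b c : Fin p → ℤ)
    (hb : ∀ i, b i < c i ∧ 0 ≤ b i ∧ c i ≤ (l : ℤ) - 1)
    (hj2 : 2 * l + 2 ≤ jIdx r k) (hjr : jIdx r k ≤ r)
    (S S' : Finset ℕ)
    (hSQ : ∀ q ∈ S, q < l ∧ ¬ inBC p b c (q : ℤ))
    (hSQ' : ∀ q ∈ S', q < l ∧ ¬ inBC p b c (q : ℤ))
    (h : MSet r k l p b c S = MSet r k l p b c S') : S = S' := by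
  ext q
  by_cases hq : q < l ∧ ¬ inBC p b c (q : ℤ)
  · have hyr : jIdx r k - 2 * q - 3 < r := by omega
    set y : Fin r := ⟨jIdx r k - 2 * q - 3, hyr⟩ with hyy
    have hy' : (y : ℕ) + 1 + (2 * q + 2) = jIdx r k := by
      show jIdx r k - 2 * q - 3 + 1 + (2 * q + 2) = jIdx r k
      omega
    have h1 := valMSet r k l p b c hb q hq.1 hq.2 S y hy' 1
    have h2 := valMSet r k l p b c hb q hq.1 hq.2 S' y hy' 1
    rw [h] at h1
    rw [h1] at h2
    simp only [if_pos rfl] at h2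
    by_cases hqS : q ∈ S <;> by_cases hqS' : q ∈ S' <;> simp [hqS, hqS'] at h2 ⊢
  · constructor
    · intro hqS; exact absurd (hSQ q hqS) hq
    · intro hqS; exact absurd (hSQ' q hqS) hq

lemma jIdx_facts (r k l : ℕ) (hr : 3 ≤ r) (hk1 : (r + 1) / 2 + 1 ≤ k)
    (hk2 : k + 1 ≤ r) (hl : k + l + 1 ≤ r) :
    2 * l + 2 ≤ jIdx r k ∧ jIdx r k ≤ r := by
  unfold jIdx
  simp only
  split_ifs <;> omega

lemma prod_single (r : ℕ) (S : Finset ℕ) (a : ℕ → Mon r) :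
    (∏ q ∈ S, (AddMonoidAlgebra.single (a q) (1 : ℤ) : AddMonoidAlgebra ℤ (Mon r)))
      = AddMonoidAlgebra.single (∑ q ∈ S, a q) (1 : ℤ) := by
  induction S using Finset.induction with
  | empty => simp [AddMonoidAlgebra.one_def]
  | insert _ _ hq ih =>
    rw [Finset.prod_insert hq, Finset.sum_insert hq, ih, AddMonoidAlgebra.single_mul_single,
      one_mul]



/-- the Laurent-polynomial identity
`H_1[𝐛,𝐜] ⋅ ∏_{q ∈ {0,…,l-1}∖[𝐛,𝐜]} (1 + A_{1,j_k-2q-2}^{-1}) = Σ_{M ∈ 𝔇(𝐛,𝐜)} M`,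
where `𝔇(𝐛,𝐜)` is the (finite) monomial realization of the Demazure crystal
`B((Σ_{s=j_k-2l-1}^{j_k-1} Λ_s) - α[𝐛,𝐜;j_k])_w`, stated in the group algebra
`ℤ[Y^{±1}]` of Laurent monomials. -/
theorem statement19 (r : ℕ) (hr : 3 ≤ r) (k l : ℕ)
    (hk1 : (r + 1) / 2 + 1 ≤ k) (hk2 : k + 1 ≤ r) (hl : k + l + 1 ≤ r)
    (p : ℕ) (b c : Fin p → ℤ) (hbc : IsRpair (l - 1) p b c) :
    (Dem19 r k l p b c).Finite ∧
    (AddMonoidAlgebra.single (H1bcExp r k l p b c) (1 : ℤ) *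
        ∏ q ∈ Finset.range l,
          (if inBC p b c (q : ℤ) then 1
           else 1 + AddMonoidAlgebra.single (-(AexpMz r (jkz r k - 2 * (q : ℤ) - 2))) (1 : ℤ)) =
      ∑ᶠ M ∈ Dem19 r k l p b c, AddMonoidAlgebra.single M (1 : ℤ)) := by
  classical
  obtain ⟨hj2, hjr⟩ := jIdx_facts r k l hr hk1 hk2 hl
  have hb : ∀ i, b i < c i ∧ 0 ≤ b i ∧ c i ≤ (l : ℤ) - 1 := by
    intro i
    obtain ⟨h1, h2, h3⟩ := hbc
    have ha := h1 i
    have hbi := (h3 i).1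
    have hci := (h3 i).2
    omega
  have hQmem : ∀ q : ℕ,
      q ∈ (Finset.range l).filter (fun q : ℕ => ¬ inBC p b c ((q : ℕ) : ℤ)) ↔
        (q < l ∧ ¬ inBC p b c (q : ℤ)) := by
    intro q; rw [Finset.mem_filter, Finset.mem_range]
  have hLnd : ((((Finset.range l).filter fun q : ℕ =>
      ¬ inBC p b c ((q : ℕ) : ℤ)).sort (· ≤ ·)).reverse).Nodup :=
    List.nodup_reverse.2 (Finset.sort_nodup _ _)
  have hLmem : ∀ q : ℕ, q ∈ ((((Finset.range l).filter fun q : ℕ =>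
      ¬ inBC p b c ((q : ℕ) : ℤ)).sort (· ≤ ·)).reverse) ↔
      (q < l ∧ ¬ inBC p b c (q : ℤ)) := by
    intro q
    rw [List.mem_reverse, Finset.mem_sort]
    exact hQmem q
  have hLto : ((((Finset.range l).filter fun q : ℕ =>
      ¬ inBC p b c ((q : ℕ) : ℤ)).sort (· ≤ ·)).reverse).toFinset =
      (Finset.range l).filter (fun q : ℕ => ¬ inBC p b c ((q : ℕ) : ℤ)) := by
    ext q
    rw [List.mem_toFinset, hLmem, hQmem]
  have hM0 : some (H1bcExp r k l p b c) = some (MSet r k l p b c ∅) := by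
    unfold MSet; rw [Finset.sum_empty, sub_zero]
  have hDem : Dem19 r k l p b c =
      ↑((((Finset.range l).filter fun q : ℕ =>
        ¬ inBC p b c ((q : ℕ) : ℤ)).powerset).image (MSet r k l p b c)) := by
    ext M
    simp only [Dem19, Set.mem_setOf_eq, Finset.coe_image, Set.mem_image, Finset.mem_coe,
      Finset.mem_powerset]
    constructor
    · rintro ⟨c', hc'⟩
      rw [hM0] at hc'
      obtain ⟨T, hT1, hT2⟩ := foldl_complete r k l p b c hb hj2 hjr _ hLnd
        (fun q hq => (hLmem q).1 hq) ∅ (fun q _ => Finset.notMem_empty q) c' M hc'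
      rw [Finset.empty_union, hLto] at hT2
      exact ⟨T, hT2, hT1.symm⟩
    · rintro ⟨T, hT, rfl⟩
      refine ⟨fun q => if q ∈ T then 1 else 0, ?_⟩
      rw [hM0]
      have := foldl_exists r k l p b c hb hj2 hjr _ hLnd
        (fun q hq => (hLmem q).1 hq) ∅ (fun q _ => Finset.notMem_empty q) T
        (by rw [hLto]; exact hT) _ (fun q _ => rfl)
      rw [this, Finset.empty_union]
  constructor
  · rw [hDem]
    exact Finset.finite_toSet _
  · rw [hDem, finsum_mem_coe_finset,
      Finset.sum_image (fun S hS S' hS' h => MSet_inj r k l p b c hb hj2 hjr S S'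
        (fun q hq => (hQmem q).1 (Finset.mem_powerset.1 hS hq))
        (fun q hq => (hQmem q).1 (Finset.mem_powerset.1 hS' hq)) h)]
    have hprod : (∏ q ∈ Finset.range l,
          (if inBC p b c (q : ℤ) then 1
           else 1 + AddMonoidAlgebra.single (-(AexpMz r (jkz r k - 2 * (q : ℤ) - 2)))
             (1 : ℤ))) =
        ∏ q ∈ (Finset.range l).filter (fun q : ℕ => ¬ inBC p b c ((q : ℕ) : ℤ)),
          (AddMonoidAlgebra.single (-(AexpMz r (jkz r k - 2 * (q : ℤ) - 2)))
            (1 : ℤ) + 1) := by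
      rw [Finset.prod_filter]
      refine Finset.prod_congr rfl fun q _ => ?_
      by_cases h : inBC p b c (q : ℤ) <;> simp [h, add_comm]
    rw [hprod, Finset.prod_add, Finset.mul_sum]
    refine Finset.sum_congr rfl fun S hS => ?_
    rw [Finset.prod_const_one, mul_one, prod_single, AddMonoidAlgebra.single_mul_single, one_mul]
    congr 1
    unfold MSet
    simp only [jkz]
    rw [Finset.sum_neg_distrib, ← sub_eq_add_neg]

end DBC
end
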